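/- arXiv:1407.1377 — 7 statements merged into one kernel-verified Lean document; each statement's English description precedes it below -/
import Mathlib

section
/- Let L be the irreducible Laplacian of a strongly connected weighted digraph with positive left null vector ξ (ξᵀL = 0, ∑ξᵢ = 1) and Ξ = diag(ξ). Then the symmetric matrix ΞL + LᵀΞ has all row sums equal to zero, has nonpositive eigenvalues, and zero is an eigenvalue of algebraic multiplicity one. -/
open Matrix

/-- Edge relation of a weighted digraph: `edge A j i` means there is a
directed link from agent `j` to agent `i`, i.e. `A i j > 0`. -/
def edge {m : ℕ} (A : Matrix (Fin m) (Fin m) ℝ) (j i : Fin m) : Prop :=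
  0 < A i j

/-- `G` is strongly connected. -/
def StronglyConnected {m : ℕ} (A : Matrix (Fin m) (Fin m) ℝ) : Prop :=
  ∀ i j : Fin m, Relation.ReflTransGen (edge A) i j

/-- Laplacian-type quadratic form identity. -/
lemma quad_identity {m : ℕ} (w M : Matrix (Fin m) (Fin m) ℝ)
    (hsymm : ∀ i j, w i j = w j i)
    (hM : ∀ i j, M i j = (if i = j then ∑ k, w i k else 0) - w i j)
    (x : Fin m → ℝ) :
    2 * (x ⬝ᵥ M *ᵥ x) = ∑ i, ∑ j, w i j * (x i - x j) ^ 2 := by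
  have inner : ∀ i, x i * ∑ j, M i j * x j
      = (∑ j, w i j * x i ^ 2) - ∑ j, w i j * (x i * x j) := by
    intro i
    calc x i * ∑ j, M i j * x j = ∑ j, x i * (M i j * x j) := by rw [Finset.mul_sum]
      _ = ∑ j, ((if i = j then (∑ k, w i k) * (x i * x i) else 0) - w i j * (x i * x j)) := by
          refine Finset.sum_congr rfl fun j _ => ?_
          rw [hM]
          by_cases h : i = j
          · subst h; simp; ring
          · simp [h]; ring
      _ = (∑ j, if i = j then (∑ k, w i k) * (x i * x i) else 0)
            - ∑ j, w i j * (x i * x j) := by rw [Finset.sum_sub_distrib]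
      _ = (∑ k, w i k) * (x i * x i) - ∑ j, w i j * (x i * x j) := by
          rw [Finset.sum_ite_eq]; simp
      _ = (∑ j, w i j * x i ^ 2) - ∑ j, w i j * (x i * x j) := by
          rw [Finset.sum_mul]
          congr 1
          exact Finset.sum_congr rfl fun j _ => by ring
  have lhs : x ⬝ᵥ M *ᵥ x
      = (∑ i, ∑ j, w i j * x i ^ 2) - ∑ i, ∑ j, w i j * (x i * x j) := by
    rw [← Finset.sum_sub_distrib]
    simp only [dotProduct, mulVec, dotProduct]
    exact Finset.sum_congr rfl fun i _ => inner i
  have swap : (∑ i, ∑ j, w i j * x j ^ 2) = ∑ i, ∑ j, w i j * x i ^ 2 := by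
    rw [Finset.sum_comm]
    exact Finset.sum_congr rfl fun i _ => Finset.sum_congr rfl fun j _ => by rw [hsymm]
  have expand : (∑ i, ∑ j, w i j * (x i - x j) ^ 2)
      = ∑ i, ∑ j, (w i j * x i ^ 2 - 2 * (w i j * (x i * x j)) + w i j * x j ^ 2) :=
    Finset.sum_congr rfl fun i _ => Finset.sum_congr rfl fun j _ => by ring
  rw [lhs, expand]
  simp only [Finset.sum_add_distrib, Finset.sum_sub_distrib, ← Finset.mul_sum]
  rw [swap]
  ring

/-- If `L` is the irreducible Laplacian of a strongly connected weighted digraph, with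
positive left null vector `ξ` and `Ξ = diagonal ξ`, then `Ξ L + Lᵀ Ξ` has all row sums
equal to zero, has nonpositive eigenvalues (i.e. its negative is positive semidefinite),
and zero is an eigenvalue of algebraic multiplicity one. -/
theorem xiL_plus_LtXi_metzler
    {m : ℕ} [NeZero m]
    (A D L : Matrix (Fin m) (Fin m) ℝ)
    (hA_nonneg : ∀ i j, 0 ≤ A i j)
    (hA_diag : ∀ i, A i i = 0)
    (hD : D = Matrix.diagonal (fun i => ∑ j, A i j))
    (hL : L = A - D)
    (hSC : StronglyConnected A)
    (ξ : Fin m → ℝ)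
    (hξ_pos : ∀ i, 0 < ξ i)
    (hξL : ξ ᵥ* L = 0)
    (hξ_sum : ∑ i, ξ i = 1)
    (S : Matrix (Fin m) (Fin m) ℝ)
    (hS : S = Matrix.diagonal ξ * L + Lᵀ * Matrix.diagonal ξ) :
    (∀ i, ∑ j, S i j = 0) ∧
    (-S).PosSemidef ∧
    Polynomial.rootMultiplicity (0 : ℝ) S.charpoly = 1 := by
  -- basic entrywise facts
  set d : Fin m → ℝ := fun i => ∑ j, A i j with hd
  have hLij : ∀ i j, L i j = A i j - if i = j then d i else 0 := by
    intro i j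
    rw [hL, hD]
    by_cases h : i = j
    · subst h; simp [Matrix.sub_apply, Matrix.diagonal_apply_eq]
    · simp [Matrix.sub_apply, Matrix.diagonal_apply_ne _ h, h]
  have hLrow : ∀ i, ∑ j, L i j = 0 := by
    intro i
    simp only [hLij]
    rw [Finset.sum_sub_distrib, Finset.sum_ite_eq]
    simp [hd]
  have hxiL : ∀ i, ∑ j, ξ j * L j i = 0 := by
    intro i
    have := congrFun hξL i
    simpa [Matrix.vecMul, dotProduct] using this
  have hAcol : ∀ i, ∑ j, ξ j * A j i = ξ i * d i := by
    intro i
    have h0 := hxiL i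
    have : ∑ j, ξ j * L j i
        = (∑ j, ξ j * A j i) - ∑ j, (if j = i then ξ j * d j else 0) := by
      rw [← Finset.sum_sub_distrib]
      refine Finset.sum_congr rfl fun j _ => ?_
      rw [hLij]
      by_cases h : j = i
      · subst h; simp; ring
      · simp [h]
    rw [this, Finset.sum_ite_eq'] at h0
    simp at h0
    linarith
  have hSentry : ∀ i j, S i j = ξ i * L i j + L j i * ξ j := by
    intro i j
    rw [hS]
    simp [Matrix.add_apply, Matrix.diagonal_mul, Matrix.mul_diagonal, Matrix.transpose_apply]
  -- row sums are zero
  have hrow : ∀ i, ∑ j, S i j = 0 := by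
    intro i
    simp only [hSentry]
    rw [Finset.sum_add_distrib, ← Finset.mul_sum, hLrow i, mul_zero, zero_add]
    calc (∑ j, L j i * ξ j) = ∑ j, ξ j * L j i := Finset.sum_congr rfl fun j _ => by ring
      _ = 0 := hxiL i
  -- the symmetric weight matrix
  set w : Matrix (Fin m) (Fin m) ℝ := fun i j => ξ i * A i j + ξ j * A j i with hw
  have hw_nonneg : ∀ i j, 0 ≤ w i j := fun i j => by
    have h1 := mul_nonneg (hξ_pos i).le (hA_nonneg i j)
    have h2 := mul_nonneg (hξ_pos j).le (hA_nonneg j i)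
    simpa [hw] using add_nonneg h1 h2
  have hw_symm : ∀ i j, w i j = w j i := fun i j => by simp [hw]; ring
  have hw_rowsum : ∀ i, ∑ k, w i k = 2 * (ξ i * d i) := by
    intro i
    simp only [hw]
    rw [Finset.sum_add_distrib, ← Finset.mul_sum, hAcol i]
    simp only [hd]
    ring
  have hMform : ∀ i j, (-S) i j = (if i = j then ∑ k, w i k else 0) - w i j := by
    intro i j
    rw [Matrix.neg_apply, hSentry]
    by_cases h : i = j
    · subst h
      rw [if_pos rfl, hw_rowsum i, hLij]
      simp [hw, hA_diag i]
      try ring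
    · have h' : ¬ j = i := fun hh => h hh.symm
      rw [if_neg h, hLij, hLij]
      simp [hw, h, h']
      ring
  -- quadratic form identity
  have key : ∀ x : Fin m → ℝ,
      2 * (x ⬝ᵥ (-S) *ᵥ x) = ∑ i, ∑ j, w i j * (x i - x j) ^ 2 :=
    quad_identity w (-S) hw_symm hMform
  -- symmetry of S
  have hsymmS : ∀ i j, S i j = S j i := by
    intro i j
    rw [hSentry, hSentry]
    ring
  have hSsymm : Sᵀ = S := by
    ext i j
    rw [Matrix.transpose_apply]
    exact hsymmS j i
  -- Hermitian
  have hherm : (-S).IsHermitian := by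
    rw [Matrix.IsHermitian, Matrix.conjTranspose_eq_transpose_of_trivial,
      Matrix.transpose_neg, hSsymm]
  -- positive semidefinite
  have hpsd : (-S).PosSemidef := by
    refine Matrix.PosSemidef.of_dotProduct_mulVec_nonneg hherm fun x => ?_
    have hsum : 0 ≤ ∑ i, ∑ j, w i j * (x i - x j) ^ 2 :=
      Finset.sum_nonneg fun i _ => Finset.sum_nonneg fun j _ =>
        mul_nonneg (hw_nonneg i j) (sq_nonneg _)
    have h2 := key x
    have hx : (0 : ℝ) ≤ x ⬝ᵥ (-S) *ᵥ x := by linarith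
    simpa [star_trivial] using hx
  -- kernel is the span of the all-ones vector
  set u : Fin m → ℝ := fun _ => 1 with hu
  have hu_ne : u ≠ 0 := by
    intro h
    have := congrFun h ⟨0, Nat.pos_of_ne_zero (NeZero.ne m)⟩
    simp [hu] at this
  have hSu : S *ᵥ u = 0 := by
    funext i
    simp only [Matrix.mulVec, dotProduct, hu]
    simpa using hrow i
  have hker_eq : ∀ x : Fin m → ℝ, S *ᵥ x = 0 → ∀ i j, x i = x j := by
    intro x hx i j
    have hq : x ⬝ᵥ (-S) *ᵥ x = 0 := by
      rw [Matrix.neg_mulVec, hx]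
      simp
    have hsum0 : ∑ i, ∑ j, w i j * (x i - x j) ^ 2 = 0 := by
      rw [← key x, hq, mul_zero]
    have hterm : ∀ p ∈ Finset.univ, ∀ q ∈ Finset.univ, w p q * (x p - x q) ^ 2 = 0 := by
      have houter := (Finset.sum_eq_zero_iff_of_nonneg
        (fun p _ => Finset.sum_nonneg fun q _ =>
          mul_nonneg (hw_nonneg p q) (sq_nonneg _))).mp hsum0
      intro p hp q hq
      exact (Finset.sum_eq_zero_iff_of_nonneg
        (fun q _ => mul_nonneg (hw_nonneg p q) (sq_nonneg _))).mp (houter p hp) q hq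
    have hstep : ∀ p q, 0 < A p q → x p = x q := by
      intro p q hpq
      have hwpos : 0 < w p q :=
        lt_of_lt_of_le (mul_pos (hξ_pos p) hpq)
          (le_add_of_nonneg_right (mul_nonneg (hξ_pos q).le (hA_nonneg q p)))
      have := hterm p (Finset.mem_univ p) q (Finset.mem_univ q)
      rcases mul_eq_zero.mp this with h | h
      · exact absurd h hwpos.ne'
      · have := pow_eq_zero_iff (n := 2) (by norm_num) |>.mp h
        linarith [sub_eq_zero.mp this]
    -- propagate along paths
    have hpath : ∀ p q : Fin m, Relation.ReflTransGen (edge A) p q → x q = x p := by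
      intro p q h
      induction h with
      | refl => rfl
      | tail _ hbc ih =>
        exact (hstep _ _ hbc).trans ih
    exact (hpath j i (hSC j i)).symm ▸ rfl
  -- characterize the kernel of S as a linear map
  have hker_span : LinearMap.ker (Matrix.toLin' S) = Submodule.span ℝ {u} := by
    apply le_antisymm
    · intro x hx
      have hx' : S *ᵥ x = 0 := by
        simpa [Matrix.toLin'_apply] using (LinearMap.mem_ker.mp hx)
      have i0 : Fin m := ⟨0, Nat.pos_of_ne_zero (NeZero.ne m)⟩
      have : x = x i0 • u := by
        funext j
        simp [hu, hker_eq x hx' j i0]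
      rw [Submodule.mem_span_singleton]
      exact ⟨x i0, this.symm⟩
    · rw [Submodule.span_le, Set.singleton_subset_iff]
      refine LinearMap.mem_ker.mpr ?_
      simp [Matrix.toLin'_apply, hSu]
  -- zero has algebraic multiplicity one
  set φ : Module.End ℝ (Fin m → ℝ) := Matrix.toLin' S with hφ
  have hker2 : ∀ y : Fin m → ℝ, φ (φ y) = 0 → φ y = 0 := by
    intro y hy
    have happ : ∀ z, φ z = S *ᵥ z := fun z => Matrix.toLin'_apply S z
    rw [happ, happ] at hy
    rw [happ]
    have : (S *ᵥ y) ⬝ᵥ (S *ᵥ y) = 0 := by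
      rw [Matrix.dotProduct_mulVec, ← Matrix.mulVec_transpose, hSsymm, hy]
      simp [dotProduct]
    exact dotProduct_self_eq_zero.mp this
  have hpow : ∀ (n : ℕ) (x : Fin m → ℝ), (φ ^ n) x = 0 → φ x = 0 := by
    intro n
    induction n with
    | zero => intro x hx; simp at hx; simp [hx]
    | succ k ih =>
      intro x hx
      rw [pow_succ, Module.End.mul_apply] at hx
      exact hker2 x (ih (φ x) hx)
  have hmax : φ.maxGenEigenspace 0 = LinearMap.ker φ := by
    ext x
    rw [Module.End.mem_maxGenEigenspace, LinearMap.mem_ker]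
    simp only [zero_smul, sub_zero]
    constructor
    · rintro ⟨k, hk⟩
      exact hpow k x hk
    · intro h
      exact ⟨1, by simpa using h⟩
  have hmat : LinearMap.toMatrix (Pi.basisFun ℝ (Fin m)) (Pi.basisFun ℝ (Fin m)) φ = S :=
    LinearMap.toMatrix'_toLin' S
  have hchar : S.charpoly = φ.charpoly := by
    conv_lhs => rw [← hmat]
    exact LinearMap.charpoly_toMatrix _ _
  have hmult : Polynomial.rootMultiplicity (0 : ℝ) S.charpoly = 1 := by
    rw [Polynomial.rootMultiplicity_eq_natTrailingDegree', hchar,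
      ← LinearMap.finrank_maxGenEigenspace_zero_eq, hmax, hker_span]
    exact finrank_span_singleton hu_ne
  exact ⟨hrow, hpsd, hmult⟩
end

section
/- Let A be an m×m row-stochastic matrix with positive diagonal entries whose associated directed graph (edge j→i when A_ij > 0) has a spanning tree. Then lim_{k→∞} A^k = 𝟏 vᵀ, where v is the unique nonnegative vector satisfying Aᵀv = v and 𝟏ᵀv = 1. -/
open Matrix Filter

/-- The digraph of `A` has a spanning tree: some vertex has a directed path to every
other vertex. -/
def HasSpanningTree {m : ℕ} (A : Matrix (Fin m) (Fin m) ℝ) : Prop :=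
  ∃ i₀ : Fin m, ∀ j : Fin m, Relation.ReflTransGen (edge A) i₀ j

section Aux

set_option linter.unusedSectionVars false

open Finset

variable {m : ℕ} [NeZero m]

private lemma univNe : (Finset.univ : Finset (Fin m)).Nonempty := Finset.univ_nonempty

private lemma pow_entry_nonneg (A : Matrix (Fin m) (Fin m) ℝ) (h : ∀ i j, 0 ≤ A i j) :
    ∀ k i j, 0 ≤ (A ^ k) i j := by
  intro k
  induction k with
  | zero => intro i j; simp [Matrix.one_apply]; split <;> norm_num
  | succ n ih =>
      intro i j
      rw [pow_succ, Matrix.mul_apply]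
      exact Finset.sum_nonneg fun l _ => mul_nonneg (ih i l) (h l j)

private lemma pow_rowsum (A : Matrix (Fin m) (Fin m) ℝ) (h : ∀ i, ∑ j, A i j = 1) :
    ∀ k i, ∑ j, (A ^ k) i j = 1 := by
  intro k
  induction k with
  | zero => intro i; simp [Matrix.one_apply]
  | succ n ih =>
      intro i
      simp only [pow_succ, Matrix.mul_apply]
      rw [Finset.sum_comm]
      simp_rw [← Finset.mul_sum, h]
      simpa using ih i

private lemma pos_persist (A : Matrix (Fin m) (Fin m) ℝ) (h : ∀ i j, 0 ≤ A i j)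
    (h_diag : ∀ i, 0 < A i i) {i₀ j : Fin m} {n : ℕ} (hp : 0 < (A ^ n) j i₀) :
    0 < (A ^ (n + 1)) j i₀ := by
  rw [pow_succ', Matrix.mul_apply]
  have : 0 < A j j * (A ^ n) j i₀ := mul_pos (h_diag j) hp
  refine lt_of_lt_of_le this ?_
  exact Finset.single_le_sum (f := fun l => A j l * (A ^ n) l i₀)
    (fun l _ => mul_nonneg (h j l) (pow_entry_nonneg A h n l i₀)) (Finset.mem_univ j)

private lemma pos_persist_ge (A : Matrix (Fin m) (Fin m) ℝ) (h : ∀ i j, 0 ≤ A i j)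
    (h_diag : ∀ i, 0 < A i i) {i₀ j : Fin m} {n n' : ℕ} (hle : n ≤ n')
    (hp : 0 < (A ^ n) j i₀) : 0 < (A ^ n') j i₀ := by
  induction n' , hle using Nat.le_induction with
  | base => exact hp
  | succ k hk ih => exact pos_persist A h h_diag ih

private lemma reach_pos (A : Matrix (Fin m) (Fin m) ℝ) (h : ∀ i j, 0 ≤ A i j)
    {i₀ j : Fin m} (hr : Relation.ReflTransGen (edge A) i₀ j) :
    ∃ n, 0 < (A ^ n) j i₀ := by
  induction hr with
  | refl => exact ⟨0, by simp [Matrix.one_apply]⟩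
  | @tail b c hab hbc ih =>
      obtain ⟨n, hn⟩ := ih
      refine ⟨n + 1, ?_⟩
      rw [pow_succ', Matrix.mul_apply]
      have : 0 < A c b * (A ^ n) b i₀ := mul_pos hbc hn
      refine lt_of_lt_of_le this ?_
      exact Finset.single_le_sum (f := fun l => A c l * (A ^ n) l i₀)
        (fun l _ => mul_nonneg (h c l) (pow_entry_nonneg A h n l i₀)) (Finset.mem_univ b)

private lemma pos_column (A : Matrix (Fin m) (Fin m) ℝ) (h : ∀ i j, 0 ≤ A i j)
    (h_diag : ∀ i, 0 < A i i) {i₀ : Fin m}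
    (h_tree : ∀ j, Relation.ReflTransGen (edge A) i₀ j) :
    ∃ N : ℕ, 1 ≤ N ∧ ∀ j, 0 < (A ^ N) j i₀ := by
  choose n hn using fun j => reach_pos A h (h_tree j)
  refine ⟨(Finset.univ.sup n) + 1, le_add_self, fun j => ?_⟩
  exact pos_persist_ge A h h_diag
    (Nat.le_succ_of_le (Finset.le_sup (Finset.mem_univ j))) (hn j)

private lemma mulVec_le_sup (B : Matrix (Fin m) (Fin m) ℝ)
    (h_nonneg : ∀ i j, 0 ≤ B i j) (h_rowsum : ∀ i, ∑ j, B i j = 1)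
    (x : Fin m → ℝ) (i : Fin m) :
    (B *ᵥ x) i ≤ Finset.univ.sup' univNe x := by
  have h1 : (B *ᵥ x) i ≤ ∑ j, B i j * Finset.univ.sup' univNe x := by
    simp only [Matrix.mulVec, dotProduct]
    exact Finset.sum_le_sum fun j _ =>
      mul_le_mul_of_nonneg_left (Finset.le_sup' x (Finset.mem_univ j)) (h_nonneg i j)
  calc (B *ᵥ x) i ≤ ∑ j, B i j * Finset.univ.sup' univNe x := h1
    _ = Finset.univ.sup' univNe x := by rw [← Finset.sum_mul, h_rowsum i, one_mul]

private lemma inf_le_mulVec (B : Matrix (Fin m) (Fin m) ℝ)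
    (h_nonneg : ∀ i j, 0 ≤ B i j) (h_rowsum : ∀ i, ∑ j, B i j = 1)
    (x : Fin m → ℝ) (i : Fin m) :
    Finset.univ.inf' univNe x ≤ (B *ᵥ x) i := by
  have h1 : ∑ j, B i j * Finset.univ.inf' univNe x ≤ (B *ᵥ x) i := by
    simp only [Matrix.mulVec, dotProduct]
    exact Finset.sum_le_sum fun j _ =>
      mul_le_mul_of_nonneg_left (Finset.inf'_le x (Finset.mem_univ j)) (h_nonneg i j)
  calc Finset.univ.inf' univNe x
      = ∑ j, B i j * Finset.univ.inf' univNe x := by rw [← Finset.sum_mul, h_rowsum i, one_mul]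
    _ ≤ (B *ᵥ x) i := h1

private lemma contraction (B : Matrix (Fin m) (Fin m) ℝ)
    (h_nonneg : ∀ i j, 0 ≤ B i j) (h_rowsum : ∀ i, ∑ j, B i j = 1)
    {i₀ : Fin m} {δ : ℝ} (hδ : ∀ i, δ ≤ B i i₀)
    (x : Fin m → ℝ) :
    Finset.univ.sup' univNe (B *ᵥ x) - Finset.univ.inf' univNe (B *ᵥ x) ≤
      (1 - δ) * (Finset.univ.sup' univNe x - Finset.univ.inf' univNe x) := by
  set S := Finset.univ.sup' univNe x with hS
  set s := Finset.univ.inf' univNe x with hs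
  set C : Matrix (Fin m) (Fin m) ℝ := fun i j => B i j - if j = i₀ then δ else 0 with hC
  have hCnn : ∀ i j, 0 ≤ C i j := by
    intro i j
    simp only [hC]
    split
    · next h => subst h; linarith [hδ i]
    · simpa using h_nonneg i j
  have hCsum : ∀ i, ∑ j, C i j = 1 - δ := by
    intro i
    simp only [hC, Finset.sum_sub_distrib, h_rowsum i, Finset.sum_ite_eq']
    simp
  have hdecomp : ∀ i, (B *ᵥ x) i = δ * x i₀ + ∑ j, C i j * x j := by
    intro i
    simp only [Matrix.mulVec, dotProduct, hC, sub_mul, Finset.sum_sub_distrib, ite_mul,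
      zero_mul, Finset.sum_ite_eq', Finset.mem_univ, if_true]
    ring
  have hup : ∀ i, (B *ᵥ x) i ≤ δ * x i₀ + (1 - δ) * S := by
    intro i
    rw [hdecomp i]
    gcongr
    calc ∑ j, C i j * x j ≤ ∑ j, C i j * S :=
          Finset.sum_le_sum fun j _ =>
            mul_le_mul_of_nonneg_left (Finset.le_sup' x (Finset.mem_univ j)) (hCnn i j)
      _ = (1 - δ) * S := by rw [← Finset.sum_mul, hCsum i]
  have hdown : ∀ i, δ * x i₀ + (1 - δ) * s ≤ (B *ᵥ x) i := by
    intro i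
    rw [hdecomp i]
    gcongr
    calc (1 - δ) * s = ∑ j, C i j * s := by rw [← Finset.sum_mul, hCsum i]
      _ ≤ ∑ j, C i j * x j :=
          Finset.sum_le_sum fun j _ =>
            mul_le_mul_of_nonneg_left (Finset.inf'_le x (Finset.mem_univ j)) (hCnn i j)
  have h1 : Finset.univ.sup' univNe (B *ᵥ x) ≤ δ * x i₀ + (1 - δ) * S :=
    Finset.sup'_le _ _ fun i _ => hup i
  have h2 : δ * x i₀ + (1 - δ) * s ≤ Finset.univ.inf' univNe (B *ᵥ x) :=
    Finset.le_inf' _ _ fun i _ => hdown i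
  have := sub_le_sub h1 h2
  linarith [this]

private lemma column_limit (A : Matrix (Fin m) (Fin m) ℝ)
    (h_nonneg : ∀ i j, 0 ≤ A i j) (h_rowsum : ∀ i, ∑ j, A i j = 1)
    {N : ℕ} (hN : 1 ≤ N) {i₀ : Fin m} (hcol : ∀ i, 0 < (A ^ N) i i₀)
    (j : Fin m) :
    ∃ c : ℝ, ∀ i, Tendsto (fun k => (A ^ k) i j) atTop (nhds c) := by
  set B := A ^ N with hB
  have hBnn : ∀ i j, 0 ≤ B i j := pow_entry_nonneg A h_nonneg N
  have hBrs : ∀ i, ∑ j, B i j = 1 := pow_rowsum A h_rowsum N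
  set δ : ℝ := Finset.univ.inf' univNe (fun i => B i i₀) with hδdef
  have hδpos : 0 < δ := by
    rw [hδdef, Finset.lt_inf'_iff]
    exact fun i _ => hcol i
  have hδle : ∀ i, δ ≤ B i i₀ := fun i => Finset.inf'_le _ (Finset.mem_univ i)
  have hδ1 : δ ≤ 1 := by
    have h1 : B i₀ i₀ ≤ ∑ j, B i₀ j :=
      Finset.single_le_sum (fun l _ => hBnn i₀ l) (Finset.mem_univ i₀)
    have := hδle i₀
    rw [hBrs i₀] at h1
    linarith
  set f : ℕ → Fin m → ℝ := fun k i => (A ^ k) i j with hf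
  have hstep : ∀ k, f (k + 1) = A *ᵥ f k := by
    intro k
    funext i
    simp only [hf, pow_succ', Matrix.mul_apply, Matrix.mulVec, dotProduct]
  have hNstep : ∀ k, f (N + k) = B *ᵥ f k := by
    intro k
    funext i
    simp only [hf, hB, pow_add, Matrix.mul_apply, Matrix.mulVec, dotProduct]
  set M : ℕ → ℝ := fun k => Finset.univ.sup' univNe (f k) with hM
  set μ : ℕ → ℝ := fun k => Finset.univ.inf' univNe (f k) with hμ
  have hMant : Antitone M := by
    apply antitone_nat_of_succ_le
    intro k
    rw [hM]
    simp only
    rw [hstep k]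
    exact Finset.sup'_le _ _ fun i _ => mulVec_le_sup A h_nonneg h_rowsum (f k) i
  have hμmono : Monotone μ := by
    apply monotone_nat_of_le_succ
    intro k
    rw [hμ]
    simp only
    rw [hstep k]
    exact Finset.le_inf' _ _ fun i _ => inf_le_mulVec A h_nonneg h_rowsum (f k) i
  have hμM : ∀ k, μ k ≤ M k := fun k =>
    le_trans (Finset.inf'_le (f k) (Finset.mem_univ i₀)) (Finset.le_sup' (f k) (Finset.mem_univ i₀))
  have hcontr : ∀ q : ℕ, M (N * q) - μ (N * q) ≤ (1 - δ) ^ q * (M 0 - μ 0) := by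
    intro q
    induction q with
    | zero => simp
    | succ q ih =>
        have heq : N * (q + 1) = N + N * q := by ring
        have hc := contraction B hBnn hBrs hδle (f (N * q))
        rw [← hNstep (N * q)] at hc
        calc M (N * (q + 1)) - μ (N * (q + 1)) = M (N + N * q) - μ (N + N * q) := by rw [heq]
          _ ≤ (1 - δ) * (M (N * q) - μ (N * q)) := hc
          _ ≤ (1 - δ) * ((1 - δ) ^ q * (M 0 - μ 0)) := by
              apply mul_le_mul_of_nonneg_left ih; linarith
          _ = (1 - δ) ^ (q + 1) * (M 0 - μ 0) := by ring
  have hMbd : BddBelow (Set.range M) := by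
    refine ⟨μ 0, ?_⟩
    rintro _ ⟨k, rfl⟩
    exact le_trans (hμmono (Nat.zero_le k)) (hμM k)
  have hμbd : BddAbove (Set.range μ) := by
    refine ⟨M 0, ?_⟩
    rintro _ ⟨k, rfl⟩
    exact le_trans (hμM k) (hMant (Nat.zero_le k))
  have hMt : Tendsto M atTop (nhds (⨅ k, M k)) := tendsto_atTop_ciInf hMant hMbd
  have hμt : Tendsto μ atTop (nhds (⨆ k, μ k)) := tendsto_atTop_ciSup hμmono hμbd
  set L := ⨅ k, M k with hL
  set l := ⨆ k, μ k with hl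
  have hlL : l ≤ L := le_of_tendsto_of_tendsto' hμt hMt hμM
  have hNq : Tendsto (fun q : ℕ => N * q) atTop atTop := by
    apply Filter.tendsto_atTop_atTop.mpr
    intro b
    exact ⟨b, fun a ha => le_trans ha (Nat.le_mul_of_pos_left a hN)⟩
  have hsub : Tendsto (fun q => M (N * q) - μ (N * q)) atTop (nhds (L - l)) :=
    (hMt.comp hNq).sub (hμt.comp hNq)
  have hgeo : Tendsto (fun q : ℕ => (1 - δ) ^ q * (M 0 - μ 0)) atTop (nhds 0) := by
    have h0 : Tendsto (fun q : ℕ => (1 - δ) ^ q) atTop (nhds 0) :=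
      tendsto_pow_atTop_nhds_zero_of_lt_one (by linarith) (by linarith)
    simpa using h0.mul_const (M 0 - μ 0)
  have hLl : L - l ≤ 0 := le_of_tendsto_of_tendsto' hsub hgeo hcontr
  have hEq : L = l := le_antisymm (by linarith) hlL
  refine ⟨L, fun i => ?_⟩
  have hlow : ∀ k, μ k ≤ (A ^ k) i j := fun k => Finset.inf'_le (f k) (Finset.mem_univ i)
  have hhigh : ∀ k, (A ^ k) i j ≤ M k := fun k => Finset.le_sup' (f k) (Finset.mem_univ i)
  have hμt' : Tendsto μ atTop (nhds L) := by rw [hEq]; exact hμt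
  exact tendsto_of_tendsto_of_tendsto_of_le_of_le hμt' hMt hlow hhigh

end Aux

/-- For a row-stochastic matrix `A` with positive diagonal whose digraph has a spanning
tree, `A^k → 𝟏 vᵀ` where `v` is the unique nonnegative vector with `Aᵀ v = v` and
`𝟏ᵀ v = 1`. -/
theorem stochastic_spanning_tree_power_limit
    {m : ℕ} [NeZero m]
    (A : Matrix (Fin m) (Fin m) ℝ)
    (h_nonneg : ∀ i j, 0 ≤ A i j)
    (h_rowsum : ∀ i, ∑ j, A i j = 1)
    (h_diag : ∀ i, 0 < A i i)
    (h_tree : HasSpanningTree A) :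
    ∃ v : Fin m → ℝ,
      (∀ i, 0 ≤ v i) ∧ Aᵀ *ᵥ v = v ∧ ∑ i, v i = 1 ∧
      (∀ w : Fin m → ℝ, (∀ i, 0 ≤ w i) → Aᵀ *ᵥ w = w → ∑ i, w i = 1 → w = v) ∧
      Tendsto (fun k : ℕ => A ^ k) atTop (nhds (Matrix.of fun _ j => v j)) := by
  obtain ⟨i₀, htree⟩ := h_tree
  obtain ⟨N, hN1, hcol⟩ := pos_column A h_nonneg h_diag htree
  choose v hv using fun j => column_limit A h_nonneg h_rowsum hN1 hcol j
  have z : Fin m := ⟨0, Nat.pos_of_ne_zero (NeZero.ne m)⟩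
  refine ⟨v, ?_, ?_, ?_, ?_, ?_⟩
  · -- nonnegativity
    intro j
    exact ge_of_tendsto' (hv j z) (fun k => pow_entry_nonneg A h_nonneg k z j)
  · -- fixed point
    funext j
    have h1 : Tendsto (fun k => (A ^ (k + 1)) z j) atTop (nhds (v j)) :=
      (hv j z).comp (tendsto_add_atTop_nat 1)
    have h2 : Tendsto (fun k => ∑ i, (A ^ k) z i * A i j) atTop
        (nhds (∑ i, v i * A i j)) :=
      tendsto_finset_sum _ fun i _ => (hv i z).mul_const (A i j)
    have heq : (fun k => (A ^ (k + 1)) z j) = fun k => ∑ i, (A ^ k) z i * A i j := by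
      funext k
      rw [pow_succ, Matrix.mul_apply]
    rw [heq] at h1
    have := tendsto_nhds_unique h2 h1
    simp only [Matrix.mulVec, dotProduct, Matrix.transpose_apply]
    rw [← this]
    exact Finset.sum_congr rfl fun i _ => mul_comm _ _
  · -- sum is 1
    have h1 : Tendsto (fun k => ∑ j, (A ^ k) z j) atTop (nhds (∑ j, v j)) :=
      tendsto_finset_sum _ fun j _ => hv j z
    have h2 : (fun k => ∑ j, (A ^ k) z j) = fun _ => (1 : ℝ) := by
      funext k
      exact pow_rowsum A h_rowsum k z
    rw [h2] at h1
    exact (tendsto_nhds_unique tendsto_const_nhds h1).symm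
  · -- uniqueness
    intro w _ hwfix hwsum
    have hfixk : ∀ k : ℕ, (Aᵀ) ^ k *ᵥ w = w := by
      intro k
      induction k with
      | zero => simp
      | succ n ih =>
          rw [pow_succ, ← Matrix.mulVec_mulVec, hwfix, ih]
    funext j
    have heq : ∀ k : ℕ, w j = ∑ i, (A ^ k) i j * w i := by
      intro k
      conv_lhs => rw [← hfixk k]
      simp only [Matrix.mulVec, dotProduct, ← Matrix.transpose_pow, Matrix.transpose_apply]
    have h1 : Tendsto (fun k => ∑ i, (A ^ k) i j * w i) atTop
        (nhds (∑ i, v j * w i)) :=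
      tendsto_finset_sum _ fun i _ => (hv j i).mul_const (w i)
    have h2 : (fun k => ∑ i, (A ^ k) i j * w i) = fun _ => w j := by
      funext k; exact (heq k).symm
    rw [h2] at h1
    have := tendsto_nhds_unique tendsto_const_nhds h1
    rw [this, ← Finset.mul_sum, hwsum, mul_one]
  · -- convergence
    refine tendsto_pi_nhds.mpr ?_
    intro i
    rw [tendsto_pi_nhds]
    intro j
    exact hv j i
end

section
/- Let L be an m×m Laplacian matrix (off-diagonal entries nonnegative, row sums zero) whose digraph has a spanning tree, and let T₀ > 0 satisfy T₀ ≤ γ/max_i(−L_ii) for some γ ∈ (0,1). Then for any initial value x₀ ∈ R^m, the piecewise-linear trajectory x(t) = (I + (t − kT₀)L)(I + T₀L)^k x₀ for t ∈ [kT₀, (k+1)T₀) converges as t → ∞ to 𝟏 ηᵀ x₀, where η is the nonnegative left eigenvector of L for eigenvalue zero with 𝟏ᵀη = 1. -/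
open Matrix Filter

/-- Edge relation of the digraph of a Laplacian `L`: there is a directed link from `j`
to `i` when `i ≠ j` and `L i j > 0`. -/
def edgeL {m : ℕ} (L : Matrix (Fin m) (Fin m) ℝ) (j i : Fin m) : Prop :=
  i ≠ j ∧ 0 < L i j

/-- The digraph of `L` has a spanning tree. -/
def HasSpanningTreeL {m : ℕ} (L : Matrix (Fin m) (Fin m) ℝ) : Prop :=
  ∃ i₀ : Fin m, ∀ j : Fin m, Relation.ReflTransGen (edgeL L) i₀ j

section Aux

variable {m : ℕ} [NeZero m]

/-- A row-stochastic matrix. -/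
def IsStochM (M : Matrix (Fin m) (Fin m) ℝ) : Prop :=
  (∀ i j, 0 ≤ M i j) ∧ ∀ i, ∑ j, M i j = 1

lemma IsStochM.mul {A B : Matrix (Fin m) (Fin m) ℝ} (hA : IsStochM A) (hB : IsStochM B) :
    IsStochM (A * B) := by
  constructor
  · intro i j
    rw [Matrix.mul_apply]
    exact Finset.sum_nonneg fun l _ => mul_nonneg (hA.1 i l) (hB.1 l j)
  · intro i
    simp only [Matrix.mul_apply]
    rw [Finset.sum_comm]
    calc ∑ l, ∑ j, A i l * B l j = ∑ l, A i l * ∑ j, B l j := by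
          simp [Finset.mul_sum]
      _ = 1 := by simp [hB.2, hA.2 i]

lemma IsStochM.pow {A : Matrix (Fin m) (Fin m) ℝ} (hA : IsStochM A) (n : ℕ) :
    IsStochM (A ^ n) := by
  induction n with
  | zero =>
    refine ⟨fun i j => ?_, fun i => ?_⟩
    · rw [pow_zero]
      rcases eq_or_ne i j with h | h
      · subst h; simp
      · simp [Matrix.one_apply_ne h]
    · simp [pow_zero, Matrix.one_apply]
  | succ n ih => rw [pow_succ]; exact ih.mul hA

/-- Convex combination with a pivot: upper bound. -/
lemma sum_pivot_le (w v : Fin m → ℝ) (hw : ∀ j, 0 ≤ w j) (hsum : ∑ j, w j = 1)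
    (c : Fin m) (δ S : ℝ) (hδ : δ ≤ w c) (hS : ∀ j, v j ≤ S) :
    ∑ j, w j * v j ≤ S + δ * (v c - S) := by
  have h1 : ∑ j, w j * (v j - S) ≤ δ * (v c - S) := by
    have h2 : ∑ j ∈ Finset.univ.erase c, w j * (v j - S) ≤ 0 :=
      Finset.sum_nonpos fun j _ =>
        mul_nonpos_of_nonneg_of_nonpos (hw j) (by linarith [hS j])
    have h3 : ∑ j ∈ Finset.univ.erase c, w j * (v j - S) + w c * (v c - S)
        = ∑ j, w j * (v j - S) :=
      Finset.sum_erase_add _ _ (Finset.mem_univ c)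
    have h4 : w c * (v c - S) ≤ δ * (v c - S) := by
      have := hS c
      nlinarith
    linarith
  have : ∑ j, w j * (v j - S) = (∑ j, w j * v j) - S := by
    simp [mul_sub, Finset.sum_sub_distrib, ← Finset.sum_mul, hsum]
  linarith

/-- Convex combination with a pivot: lower bound. -/
lemma le_sum_pivot (w v : Fin m → ℝ) (hw : ∀ j, 0 ≤ w j) (hsum : ∑ j, w j = 1)
    (c : Fin m) (δ I : ℝ) (hδ : δ ≤ w c) (hI : ∀ j, I ≤ v j) :
    I + δ * (v c - I) ≤ ∑ j, w j * v j := by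
  have := sum_pivot_le w (fun j => -v j) hw hsum c δ (-I) hδ (fun j => by
    simpa using neg_le_neg (hI j))
  have hsum' : ∑ j, w j * (fun j => -v j) j = -∑ j, w j * v j := by
    simp [mul_neg, Finset.sum_neg_distrib]
  rw [hsum'] at this
  linarith

end Aux

/-- Periodic self-triggered consensus: if `L` is a Laplacian whose digraph has a spanning
tree and `0 < T₀ ≤ γ / max_i (-L i i)` for some `γ ∈ (0,1)`, then the piecewise-linear
trajectory `x(t) = (I + (t - kT₀)L)(I + T₀L)^k x₀` on `[kT₀, (k+1)T₀)` converges to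
`𝟏 ηᵀ x₀`, where `η ≥ 0` is the left eigenvector of `L` for eigenvalue zero with
`𝟏ᵀ η = 1`. -/
theorem periodic_self_triggered_consensus
    {m : ℕ} [NeZero m]
    (L : Matrix (Fin m) (Fin m) ℝ)
    (h_offdiag : ∀ i j, i ≠ j → 0 ≤ L i j)
    (h_rowsum : ∀ i, ∑ j, L i j = 0)
    (h_tree : HasSpanningTreeL L)
    (γ T₀ : ℝ) (hγ : γ ∈ Set.Ioo (0:ℝ) 1) (hT₀_pos : 0 < T₀)
    (hT₀ : T₀ ≤ γ / Finset.univ.sup' Finset.univ_nonempty (fun i => -L i i))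
    (η : Fin m → ℝ)
    (hη_nonneg : ∀ i, 0 ≤ η i) (hηL : η ᵥ* L = 0) (hη_sum : ∑ i, η i = 1)
    (x₀ : Fin m → ℝ)
    (x : ℝ → Fin m → ℝ)
    (hx : ∀ k : ℕ, ∀ t ∈ Set.Ico ((k : ℝ) * T₀) ((k + 1 : ℝ) * T₀),
      x t = ((1 : Matrix (Fin m) (Fin m) ℝ) + (t - k * T₀) • L) *ᵥ
              (((1 : Matrix (Fin m) (Fin m) ℝ) + T₀ • L) ^ k *ᵥ x₀)) :
    Tendsto x atTop (nhds (fun _ => η ⬝ᵥ x₀)) := by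
  obtain ⟨hγ0, hγ1⟩ := hγ
  obtain ⟨i₀, htree⟩ := h_tree
  have hne : (Finset.univ : Finset (Fin m)).Nonempty := Finset.univ_nonempty
  -- diagonal entries of L are nonpositive
  have hdiag : ∀ i, L i i ≤ 0 := by
    intro i
    have h3 : ∑ j ∈ Finset.univ.erase i, L i j + L i i = ∑ j, L i j :=
      Finset.sum_erase_add _ _ (Finset.mem_univ i)
    have h4 : 0 ≤ ∑ j ∈ Finset.univ.erase i, L i j :=
      Finset.sum_nonneg fun j hj => h_offdiag i j (Ne.symm (Finset.ne_of_mem_erase hj))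
    rw [h_rowsum i] at h3
    linarith
  -- the max of -L i i is positive
  set Λ := Finset.univ.sup' hne (fun i => -L i i) with hΛ
  have hΛ_nonneg : 0 ≤ Λ := by
    obtain ⟨i, _⟩ := hne
    exact le_trans (by linarith [hdiag i]) (Finset.le_sup' (fun i => -L i i) (Finset.mem_univ i))
  have hΛ_pos : 0 < Λ := by
    rcases hΛ_nonneg.lt_or_eq with h | h
    · exact h
    · exfalso
      rw [← h, div_zero] at hT₀
      linarith
  have hTL : ∀ i, T₀ * (-L i i) ≤ γ := by
    intro i
    have h1 : -L i i ≤ Λ := Finset.le_sup' (fun i => -L i i) (Finset.mem_univ i)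
    have h2 : T₀ * Λ ≤ γ := by
      rw [div_eq_mul_inv] at hT₀
      calc T₀ * Λ ≤ (γ * Λ⁻¹) * Λ := mul_le_mul_of_nonneg_right hT₀ hΛ_nonneg
        _ = γ := by field_simp
    calc T₀ * (-L i i) ≤ T₀ * Λ := mul_le_mul_of_nonneg_left h1 hT₀_pos.le
      _ ≤ γ := h2
  -- stochasticity of I + s L for 0 ≤ s ≤ T₀
  have hstoch : ∀ s : ℝ, 0 ≤ s → s ≤ T₀ →
      IsStochM ((1 : Matrix (Fin m) (Fin m) ℝ) + s • L) := by
    intro s hs hsT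
    constructor
    · intro i j
      rcases eq_or_ne i j with h | h
      · subst h
        have h1 : s * (-L i i) ≤ T₀ * (-L i i) :=
          mul_le_mul_of_nonneg_right hsT (by linarith [hdiag i])
        have h2 := hTL i
        simp only [Matrix.add_apply, Matrix.smul_apply, Matrix.one_apply_eq, smul_eq_mul]
        nlinarith
      · simp only [Matrix.add_apply, Matrix.smul_apply, Matrix.one_apply_ne h, smul_eq_mul]
        have := h_offdiag i j h
        nlinarith
    · intro i
      simp only [Matrix.add_apply, Matrix.smul_apply, smul_eq_mul]
      rw [Finset.sum_add_distrib, ← Finset.mul_sum, h_rowsum i]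
      simp [Matrix.one_apply]
  set P : Matrix (Fin m) (Fin m) ℝ := 1 + T₀ • L with hP
  have hPs : IsStochM P := hstoch T₀ hT₀_pos.le le_rfl
  have hPdiag : ∀ i, 0 < P i i := by
    intro i
    have h2 := hTL i
    simp only [hP, Matrix.add_apply, Matrix.smul_apply, Matrix.one_apply_eq, smul_eq_mul]
    nlinarith
  have hedge : ∀ a b, edgeL L a b → 0 < P b a := by
    intro a b ⟨hne', hpos⟩
    simp only [hP, Matrix.add_apply, Matrix.smul_apply, Matrix.one_apply_ne hne', smul_eq_mul]
    nlinarith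
  -- positive column at i₀ in some power
  have hstep : ∀ (b c : Fin m) (n : ℕ), 0 < P c b → 0 < (P ^ n) b i₀ → 0 < (P ^ (n+1)) c i₀ := by
    intro b c n hcb hb
    rw [pow_succ', Matrix.mul_apply]
    have hle : P c b * (P ^ n) b i₀ ≤ ∑ l, P c l * (P ^ n) l i₀ :=
      Finset.single_le_sum (fun l _ => mul_nonneg (hPs.1 c l) ((hPs.pow n).1 l i₀))
        (Finset.mem_univ b)
    nlinarith
  have hreach : ∀ j, ∃ n, 0 < (P ^ n) j i₀ := by
    intro j
    induction htree j with
    | refl => exact ⟨0, by rw [pow_zero]; simp⟩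
    | tail hR e ih =>
      obtain ⟨n, hn⟩ := ih
      exact ⟨n + 1, hstep _ _ n (hedge _ _ e) hn⟩
  have hbump : ∀ j n n', n ≤ n' → 0 < (P ^ n) j i₀ → 0 < (P ^ n') j i₀ := by
    intro j n n' hle h
    induction n' with
    | zero => simpa [Nat.le_zero.mp hle] using h
    | succ n' ih =>
      rcases Nat.lt_or_ge n (n' + 1) with h' | h'
      · exact hstep j j n' (hPdiag j) (ih (Nat.lt_succ_iff.mp h'))
      · have : n = n' + 1 := le_antisymm hle h'
        subst this; exact h
  choose nn hnn using hreach
  set N : ℕ := Finset.univ.sup nn + 1 with hN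
  have hNpos : 0 < N := Nat.succ_pos _
  have hQpos : ∀ j, 0 < (P ^ N) j i₀ := by
    intro j
    exact hbump j (nn j) N (le_trans (Finset.le_sup (Finset.mem_univ j)) (Nat.le_succ _)) (hnn j)
  set δ : ℝ := Finset.univ.inf' hne (fun j => (P ^ N) j i₀) with hδdef
  have hδ_pos : 0 < δ := (Finset.lt_inf'_iff hne).mpr fun j _ => hQpos j
  have hδ_le : ∀ j, δ ≤ (P ^ N) j i₀ := fun j =>
    Finset.inf'_le _ (Finset.mem_univ j)
  have hδ1 : δ ≤ 1 := by
    have h1 : (P ^ N) i₀ i₀ ≤ ∑ j, (P ^ N) i₀ j :=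
      Finset.single_le_sum (fun j _ => (hPs.pow N).1 i₀ j) (Finset.mem_univ i₀)
    rw [(hPs.pow N).2 i₀] at h1
    exact le_trans (hδ_le i₀) h1
  -- oscillation
  set Sup : (Fin m → ℝ) → ℝ := fun v => Finset.univ.sup' hne v with hSup
  set Inf : (Fin m → ℝ) → ℝ := fun v => Finset.univ.inf' hne v with hInf
  have hIS : ∀ v : Fin m → ℝ, Inf v ≤ Sup v := by
    intro v
    obtain ⟨i, _⟩ := hne
    exact le_trans (Finset.inf'_le _ (Finset.mem_univ i)) (Finset.le_sup' _ (Finset.mem_univ i))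
  have hIle : ∀ (v : Fin m → ℝ) (i), Inf v ≤ v i := fun v i => Finset.inf'_le _ (Finset.mem_univ i)
  have hSle : ∀ (v : Fin m → ℝ) (i), v i ≤ Sup v := fun v i => Finset.le_sup' _ (Finset.mem_univ i)
  -- contraction lemma
  have hcontract : ∀ (M : Matrix (Fin m) (Fin m) ℝ), IsStochM M → ∀ (d : ℝ), (∀ i, d ≤ M i i₀) →
      ∀ v, Sup (M *ᵥ v) - Inf (M *ᵥ v) ≤ (1 - d) * (Sup v - Inf v) := by
    intro M hM d hd v
    have hup : Sup (M *ᵥ v) ≤ Sup v + d * (v i₀ - Sup v) := by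
      apply Finset.sup'_le
      intro i _
      show (M *ᵥ v) i ≤ _
      simpa [Matrix.mulVec, dotProduct] using
        sum_pivot_le (M i) v (hM.1 i) (hM.2 i) i₀ d (Sup v) (hd i) (hSle v)
    have hlo : Inf v + d * (v i₀ - Inf v) ≤ Inf (M *ᵥ v) := by
      apply Finset.le_inf'
      intro i _
      show _ ≤ (M *ᵥ v) i
      simpa [Matrix.mulVec, dotProduct] using
        le_sum_pivot (M i) v (hM.1 i) (hM.2 i) i₀ d (Inf v) (hd i) (hIle v)
    nlinarith
  -- the oscillation sequence
  set a : ℕ → ℝ := fun n => Sup ((P ^ n) *ᵥ x₀) - Inf ((P ^ n) *ᵥ x₀) with ha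
  have ha_nonneg : ∀ n, 0 ≤ a n := fun n => by
    have := hIS ((P ^ n) *ᵥ x₀); simp only [ha]; linarith
  have ha_succ : ∀ n, a (n + 1) ≤ a n := by
    intro n
    have h1 : (P ^ (n+1)) *ᵥ x₀ = P *ᵥ ((P ^ n) *ᵥ x₀) := by
      rw [Matrix.mulVec_mulVec, ← pow_succ']
    have h2 := hcontract P hPs 0 (fun i => hPs.1 i i₀) ((P ^ n) *ᵥ x₀)
    simp only [ha, h1]
    linarith [h2]
  have ha_anti : Antitone a := antitone_nat_of_succ_le ha_succ
  have ha_geom : ∀ k : ℕ, a (k * N) ≤ (1 - δ) ^ k * a 0 := by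
    intro k
    induction k with
    | zero => simp
    | succ k ih =>
      have h1 : (P ^ ((k+1) * N)) *ᵥ x₀ = (P ^ N) *ᵥ ((P ^ (k * N)) *ᵥ x₀) := by
        rw [Matrix.mulVec_mulVec, ← pow_add]
        ring_nf
      have h2 := hcontract (P ^ N) (hPs.pow N) δ hδ_le ((P ^ (k * N)) *ᵥ x₀)
      have h3 : (0:ℝ) ≤ 1 - δ := by linarith
      calc a ((k+1) * N) = Sup ((P ^ N) *ᵥ ((P ^ (k * N)) *ᵥ x₀))
            - Inf ((P ^ N) *ᵥ ((P ^ (k * N)) *ᵥ x₀)) := by rw [ha]; simp only [h1]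
        _ ≤ (1 - δ) * a (k * N) := h2
        _ ≤ (1 - δ) * ((1 - δ) ^ k * a 0) := mul_le_mul_of_nonneg_left ih h3
        _ = (1 - δ) ^ (k + 1) * a 0 := by ring
  have ha_div : ∀ n : ℕ, a n ≤ (1 - δ) ^ (n / N) * a 0 := by
    intro n
    calc a n ≤ a ((n / N) * N) := ha_anti (Nat.div_mul_le_self n N)
      _ ≤ (1 - δ) ^ (n / N) * a 0 := ha_geom (n / N)
  have hdivtop : Tendsto (fun n : ℕ => n / N) atTop atTop := by
    apply tendsto_atTop_atTop.mpr
    intro b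
    exact ⟨b * N, fun n hn => (Nat.le_div_iff_mul_le hNpos).mpr hn⟩
  have ha_tendsto : Tendsto a atTop (nhds 0) := by
    have hpow : Tendsto (fun k : ℕ => (1 - δ) ^ k * a 0) atTop (nhds 0) := by
      have := (tendsto_pow_atTop_nhds_zero_of_lt_one (by linarith : (0:ℝ) ≤ 1 - δ)
        (by linarith : (1:ℝ) - δ < 1)).mul_const (a 0)
      simpa using this
    have hg : Tendsto (fun n : ℕ => (1 - δ) ^ (n / N) * a 0) atTop (nhds 0) :=
      hpow.comp hdivtop
    exact squeeze_zero ha_nonneg ha_div hg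
  -- η invariance
  have hηP : η ᵥ* P = η := by
    funext j
    have h0 : ∑ i, η i * L i j = 0 := by
      have h := congrFun hηL j
      simpa [Matrix.vecMul, dotProduct] using h
    have h1 : ∑ i, η i * (T₀ * L i j) = T₀ * ∑ i, η i * L i j := by
      rw [Finset.mul_sum]
      exact Finset.sum_congr rfl fun i _ => by ring
    have h2 : ∑ i, η i * (1 : Matrix (Fin m) (Fin m) ℝ) i j = η j := by
      simp [Matrix.one_apply, mul_ite]
    simp only [hP, Matrix.vecMul, dotProduct, Matrix.add_apply, Matrix.smul_apply,
      smul_eq_mul, mul_add, Finset.sum_add_distrib, h1, h0, h2, mul_zero, add_zero]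
  have hηPk : ∀ k : ℕ, η ᵥ* (P ^ k) = η := by
    intro k
    induction k with
    | zero => simp
    | succ k ih => rw [pow_succ, ← Matrix.vecMul_vecMul, ih, hηP]
  have hηconst : ∀ k : ℕ, η ⬝ᵥ ((P ^ k) *ᵥ x₀) = η ⬝ᵥ x₀ := by
    intro k
    rw [dotProduct_mulVec, hηPk k]
  set c : ℝ := η ⬝ᵥ x₀ with hc
  -- the pointwise bound
  have hbound : ∀ t : ℝ, 0 ≤ t → ∀ i, |x t i - c| ≤ a (⌊t / T₀⌋₊) := by
    intro t ht i
    set k : ℕ := ⌊t / T₀⌋₊ with hk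
    have hdiv_nonneg : 0 ≤ t / T₀ := div_nonneg ht hT₀_pos.le
    have hk1 : (k : ℝ) * T₀ ≤ t := by
      have h := Nat.floor_le hdiv_nonneg
      calc (k : ℝ) * T₀ ≤ (t / T₀) * T₀ := mul_le_mul_of_nonneg_right h hT₀_pos.le
        _ = t := by field_simp
    have hk2 : t < ((k : ℝ) + 1) * T₀ := by
      have h := Nat.lt_floor_add_one (t / T₀)
      calc t = (t / T₀) * T₀ := by field_simp
        _ < ((k : ℝ) + 1) * T₀ := by
          apply mul_lt_mul_of_pos_right _ hT₀_pos
          exact_mod_cast h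
    have hxt := hx k t ⟨hk1, hk2⟩
    set v : Fin m → ℝ := (P ^ k) *ᵥ x₀ with hv
    set s : ℝ := t - k * T₀ with hs
    have hs0 : 0 ≤ s := by simp only [hs]; linarith
    have hsT : s ≤ T₀ := by simp only [hs]; nlinarith
    have hMs := hstoch s hs0 hsT
    have hxti : x t i = ∑ j, ((1 : Matrix (Fin m) (Fin m) ℝ) + s • L) i j * v j := by
      rw [hxt]
      simp [Matrix.mulVec, dotProduct, hs, hv, hP]
    have hup : x t i ≤ Sup v := by
      rw [hxti]
      have h := sum_pivot_le (((1 : Matrix (Fin m) (Fin m) ℝ) + s • L) i) v (hMs.1 i) (hMs.2 i)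
        i₀ 0 (Sup v) (hMs.1 i i₀) (hSle v)
      simpa using h
    have hlo : Inf v ≤ x t i := by
      rw [hxti]
      have h := le_sum_pivot (((1 : Matrix (Fin m) (Fin m) ℝ) + s • L) i) v (hMs.1 i) (hMs.2 i)
        i₀ 0 (Inf v) (hMs.1 i i₀) (hIle v)
      simpa using h
    have hcv : c = ∑ j, η j * v j := by
      rw [← hηconst k]
      simp [dotProduct, hv]
    have hcup : c ≤ Sup v := by
      rw [hcv]
      have h := sum_pivot_le η v hη_nonneg hη_sum i₀ 0 (Sup v) (hη_nonneg i₀) (hSle v)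
      simpa using h
    have hclo : Inf v ≤ c := by
      rw [hcv]
      have h := le_sum_pivot η v hη_nonneg hη_sum i₀ 0 (Inf v) (hη_nonneg i₀) (hIle v)
      simpa using h
    have hav : a k = Sup v - Inf v := rfl
    rw [abs_sub_le_iff, hav]
    constructor <;> linarith
  -- conclusion
  rw [tendsto_pi_nhds]
  intro i
  rw [← tendsto_sub_nhds_zero_iff]
  apply squeeze_zero_norm' (a := fun t : ℝ => a ⌊t / T₀⌋₊)
  · filter_upwards [eventually_ge_atTop (0 : ℝ)] with t ht
    simpa [Real.norm_eq_abs] using hbound t ht i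
  · have hfl : Tendsto (fun t : ℝ => ⌊t / T₀⌋₊) atTop atTop :=
      tendsto_nat_floor_atTop.comp (tendsto_id.atTop_div_const hT₀_pos)
    exact ha_tendsto.comp hfl
end

section
/- Let L be a Laplacian matrix with spanning tree and T₀ ≤ γ/max_i(−L_ii) for some γ ∈ (0,1). Then A = I + T₀L is a row-stochastic matrix with positive diagonal entries whose digraph has a spanning tree, and consequently lim_{k→∞}(I + T₀L)^k = 𝟏ηᵀ where ηᵀL = 0, η ≥ 0, 𝟏ᵀη = 1. -/
open Matrix Filter

/-- Edge relation of the digraph of a matrix `M`: a directed link from `j` to `i` when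
`i ≠ j` and `M i j > 0`. -/
def edgeM {m : ℕ} (M : Matrix (Fin m) (Fin m) ℝ) (j i : Fin m) : Prop :=
  i ≠ j ∧ 0 < M i j

/-- The digraph of `M` has a spanning tree. -/
def HasSpanningTreeM {m : ℕ} (M : Matrix (Fin m) (Fin m) ℝ) : Prop :=
  ∃ i₀ : Fin m, ∀ j : Fin m, Relation.ReflTransGen (edgeM M) i₀ j

section Helpers

variable {m : ℕ} [NeZero m]

/-- Row-stochastic: nonnegative entries, each row sums to 1. -/
def RowStoch (P : Matrix (Fin m) (Fin m) ℝ) : Prop :=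
  (∀ i j, 0 ≤ P i j) ∧ (∀ i, ∑ j, P i j = 1)

lemma rowStoch_one : RowStoch (1 : Matrix (Fin m) (Fin m) ℝ) := by
  constructor
  · intro i j
    by_cases h : i = j <;> simp [Matrix.one_apply, h]
  · intro i
    simp [Matrix.one_apply]

lemma RowStoch.mul {P Q : Matrix (Fin m) (Fin m) ℝ} (hP : RowStoch P) (hQ : RowStoch Q) :
    RowStoch (P * Q) := by
  constructor
  · intro i j
    rw [Matrix.mul_apply]
    exact Finset.sum_nonneg fun l _ => mul_nonneg (hP.1 i l) (hQ.1 l j)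
  · intro i
    simp only [Matrix.mul_apply]
    rw [Finset.sum_comm]
    calc ∑ l, ∑ j, P i l * Q l j = ∑ l, P i l * ∑ j, Q l j := by
            simp [Finset.mul_sum]
      _ = ∑ l, P i l := by simp [hQ.2]
      _ = 1 := hP.2 i

lemma RowStoch.pow {P : Matrix (Fin m) (Fin m) ℝ} (hP : RowStoch P) (k : ℕ) :
    RowStoch (P ^ k) := by
  induction k with
  | zero => simpa using rowStoch_one
  | succ n ih => rw [pow_succ]; exact ih.mul hP

lemma RowStoch.entry_le_one {P : Matrix (Fin m) (Fin m) ℝ} (hP : RowStoch P) (i j : Fin m) :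
    P i j ≤ 1 := by
  have := Finset.single_le_sum (f := fun l => P i l) (fun l _ => hP.1 i l) (Finset.mem_univ j)
  rw [hP.2 i] at this
  exact this

lemma mulVec_le_sup' {P : Matrix (Fin m) (Fin m) ℝ} (hP : RowStoch P) (x : Fin m → ℝ)
    (i : Fin m) : (P.mulVec x) i ≤ Finset.univ.sup' Finset.univ_nonempty x := by
  set M := Finset.univ.sup' Finset.univ_nonempty x with hM
  calc (P.mulVec x) i = ∑ j, P i j * x j := by
        simp [Matrix.mulVec, dotProduct]
    _ ≤ ∑ j, P i j * M := Finset.sum_le_sum fun j _ =>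
        mul_le_mul_of_nonneg_left (Finset.le_sup' x (Finset.mem_univ j)) (hP.1 i j)
    _ = M := by rw [← Finset.sum_mul, hP.2 i, one_mul]

lemma inf'_le_mulVec {P : Matrix (Fin m) (Fin m) ℝ} (hP : RowStoch P) (x : Fin m → ℝ)
    (i : Fin m) : Finset.univ.inf' Finset.univ_nonempty x ≤ (P.mulVec x) i := by
  set M := Finset.univ.inf' Finset.univ_nonempty x with hM
  calc M = ∑ j, P i j * M := by rw [← Finset.sum_mul, hP.2 i, one_mul]
    _ ≤ ∑ j, P i j * x j := Finset.sum_le_sum fun j _ =>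
        mul_le_mul_of_nonneg_left (Finset.inf'_le x (Finset.mem_univ j)) (hP.1 i j)
    _ = (P.mulVec x) i := by simp [Matrix.mulVec, dotProduct]

/-- Contraction of oscillation for a stochastic matrix with a column bounded below by `δ`. -/
lemma vecMul_smul_right {m : ℕ} (v : Fin m → ℝ) (c : ℝ) (M : Matrix (Fin m) (Fin m) ℝ) :
    v ᵥ* (c • M) = c • (v ᵥ* M) := by
  funext j
  simp only [Matrix.vecMul, dotProduct, Matrix.smul_apply, smul_eq_mul, Pi.smul_apply,
    Finset.mul_sum]
  congr 1
  funext l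
  ring

/-- Contraction of oscillation for a stochastic matrix with a column bounded below by `δ`. -/
lemma contraction_s6 {P : Matrix (Fin m) (Fin m) ℝ} (hP : RowStoch P) (c : Fin m) (δ : ℝ)
    (hδ : ∀ i, δ ≤ P i c) (x : Fin m → ℝ) :
    Finset.univ.sup' Finset.univ_nonempty (P.mulVec x)
      - Finset.univ.inf' Finset.univ_nonempty (P.mulVec x)
    ≤ (1 - δ) * (Finset.univ.sup' Finset.univ_nonempty x
      - Finset.univ.inf' Finset.univ_nonempty x) := by
  set M := Finset.univ.sup' Finset.univ_nonempty x with hM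
  set mm := Finset.univ.inf' Finset.univ_nonempty x with hmm
  have hcM : x c ≤ M := Finset.le_sup' x (Finset.mem_univ c)
  have hcm : mm ≤ x c := Finset.inf'_le x (Finset.mem_univ c)
  have hrest : ∀ i, ∑ j ∈ Finset.univ.erase c, P i j = 1 - P i c := by
    intro i
    have := Finset.sum_erase_add Finset.univ (fun j => P i j) (Finset.mem_univ c)
    rw [hP.2 i] at this
    linarith
  have hup : ∀ i, (P.mulVec x) i ≤ δ * x c + (1 - δ) * M := by
    intro i
    have h1 : (P.mulVec x) i = (∑ j ∈ Finset.univ.erase c, P i j * x j) + P i c * x c := by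
      simp only [Matrix.mulVec, dotProduct]
      exact (Finset.sum_erase_add Finset.univ (fun j => P i j * x j) (Finset.mem_univ c)).symm
    have h2 : ∑ j ∈ Finset.univ.erase c, P i j * x j ≤ (1 - P i c) * M := by
      calc ∑ j ∈ Finset.univ.erase c, P i j * x j
          ≤ ∑ j ∈ Finset.univ.erase c, P i j * M := Finset.sum_le_sum fun j _ =>
            mul_le_mul_of_nonneg_left (Finset.le_sup' x (Finset.mem_univ j)) (hP.1 i j)
        _ = (1 - P i c) * M := by rw [← Finset.sum_mul, hrest i]
    have h3 := hδ i
    nlinarith [hP.1 i c]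
  have hlo : ∀ i, δ * x c + (1 - δ) * mm ≤ (P.mulVec x) i := by
    intro i
    have h1 : (P.mulVec x) i = (∑ j ∈ Finset.univ.erase c, P i j * x j) + P i c * x c := by
      simp only [Matrix.mulVec, dotProduct]
      exact (Finset.sum_erase_add Finset.univ (fun j => P i j * x j) (Finset.mem_univ c)).symm
    have h2 : (1 - P i c) * mm ≤ ∑ j ∈ Finset.univ.erase c, P i j * x j := by
      calc (1 - P i c) * mm = ∑ j ∈ Finset.univ.erase c, P i j * mm := by
            rw [← Finset.sum_mul, hrest i]
        _ ≤ ∑ j ∈ Finset.univ.erase c, P i j * x j := Finset.sum_le_sum fun j _ =>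
            mul_le_mul_of_nonneg_left (Finset.inf'_le x (Finset.mem_univ j)) (hP.1 i j)
    have h3 := hδ i
    nlinarith [hP.1 i c]
  have hsup : Finset.univ.sup' Finset.univ_nonempty (P.mulVec x) ≤ δ * x c + (1 - δ) * M :=
    Finset.sup'_le _ _ fun i _ => hup i
  have hinf : δ * x c + (1 - δ) * mm ≤ Finset.univ.inf' Finset.univ_nonempty (P.mulVec x) :=
    Finset.le_inf' _ _ fun i _ => hlo i
  linarith

end Helpers

/-- If `L` is a Laplacian whose digraph has a spanning tree and
`T₀ ≤ γ / max_i (-L i i)` with `γ ∈ (0,1)`, `T₀ > 0`, then `A = I + T₀ L` is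
row-stochastic with positive diagonal, its digraph has a spanning tree, and
`(I + T₀L)^k → 𝟏 ηᵀ` with `ηᵀL = 0`, `η ≥ 0`, `𝟏ᵀη = 1`. -/
theorem I_plus_T0L_stochastic_and_power_limit
    {m : ℕ} [NeZero m]
    (L : Matrix (Fin m) (Fin m) ℝ)
    (h_offdiag : ∀ i j, i ≠ j → 0 ≤ L i j)
    (h_rowsum : ∀ i, ∑ j, L i j = 0)
    (h_tree : HasSpanningTreeM L)
    (γ T₀ : ℝ) (hγ : γ ∈ Set.Ioo (0:ℝ) 1) (hT₀_pos : 0 < T₀)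
    (hT₀ : T₀ ≤ γ / Finset.univ.sup' Finset.univ_nonempty (fun i => -L i i)) :
    (∀ i j, 0 ≤ ((1 : Matrix (Fin m) (Fin m) ℝ) + T₀ • L) i j) ∧
    (∀ i, ∑ j, ((1 : Matrix (Fin m) (Fin m) ℝ) + T₀ • L) i j = 1) ∧
    (∀ i, 0 < ((1 : Matrix (Fin m) (Fin m) ℝ) + T₀ • L) i i) ∧
    HasSpanningTreeM ((1 : Matrix (Fin m) (Fin m) ℝ) + T₀ • L) ∧
    ∃ η : Fin m → ℝ,
      η ᵥ* L = 0 ∧ (∀ i, 0 ≤ η i) ∧ ∑ i, η i = 1 ∧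
      Tendsto (fun k : ℕ => ((1 : Matrix (Fin m) (Fin m) ℝ) + T₀ • L) ^ k) atTop
        (nhds (Matrix.of fun _ j => η j)) := by
  obtain ⟨hγ0, hγ1⟩ := hγ
  set A : Matrix (Fin m) (Fin m) ℝ := (1 : Matrix (Fin m) (Fin m) ℝ) + T₀ • L with hAdef
  -- diagonal of L is nonpositive
  have hLdiag : ∀ i, L i i ≤ 0 := by
    intro i
    have h1 := Finset.sum_erase_add Finset.univ (fun j => L i j) (Finset.mem_univ i)
    rw [h_rowsum i] at h1
    have h2 : (0:ℝ) ≤ ∑ j ∈ Finset.univ.erase i, L i j :=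
      Finset.sum_nonneg fun j hj => h_offdiag i j (Finset.ne_of_mem_erase hj).symm
    linarith
  -- T₀ * (-L i i) ≤ γ
  have hTbound : ∀ i, T₀ * (-L i i) ≤ γ := by
    intro i
    set S := Finset.univ.sup' (Finset.univ_nonempty (α := Fin m)) (fun i => -L i i) with hS
    have hiS : -L i i ≤ S := Finset.le_sup' (fun i => -L i i) (Finset.mem_univ i)
    by_cases hSpos : 0 < S
    · have h1 : T₀ * S ≤ γ := by
        rw [le_div_iff₀ hSpos] at hT₀
        exact hT₀
      have h2 : T₀ * (-L i i) ≤ T₀ * S := mul_le_mul_of_nonneg_left hiS hT₀_pos.le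
      linarith
    · push_neg at hSpos
      have : -L i i ≤ 0 := hiS.trans hSpos
      nlinarith
  -- diagonal entries of A
  have hAdiag : ∀ i, A i i = 1 + T₀ * L i i := by
    intro i
    simp [hAdef, Matrix.add_apply, Matrix.one_apply_eq, Matrix.smul_apply]
  have hAdiag_pos : ∀ i, 0 < A i i := by
    intro i
    rw [hAdiag i]
    have := hTbound i
    linarith
  -- off-diagonal entries
  have hAoff : ∀ i j, i ≠ j → A i j = T₀ * L i j := by
    intro i j h
    simp [hAdef, Matrix.add_apply, Matrix.one_apply_ne h, Matrix.smul_apply]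
  have hAnn : ∀ i j, 0 ≤ A i j := by
    intro i j
    by_cases h : i = j
    · subst h; exact (hAdiag_pos i).le
    · rw [hAoff i j h]
      exact mul_nonneg hT₀_pos.le (h_offdiag i j h)
  -- row sums
  have hArow : ∀ i, ∑ j, A i j = 1 := by
    intro i
    simp only [hAdef, Matrix.add_apply, Matrix.smul_apply, smul_eq_mul,
      Finset.sum_add_distrib, ← Finset.mul_sum, h_rowsum i, mul_zero, add_zero]
    simp [Matrix.one_apply]
  have hRS : RowStoch A := ⟨hAnn, hArow⟩
  -- spanning tree transport
  obtain ⟨i₀, hi₀⟩ := h_tree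
  have hedge : ∀ a b, edgeM L a b → edgeM A a b := by
    intro a b ⟨hne, hpos⟩
    refine ⟨hne, ?_⟩
    rw [hAoff b a hne]
    exact mul_pos hT₀_pos hpos
  have hAtree : HasSpanningTreeM A :=
    ⟨i₀, fun j => Relation.ReflTransGen.mono hedge _ _ (hi₀ j)⟩
  -- powers are stochastic
  have hpowRS : ∀ k, RowStoch (A ^ k) := hRS.pow
  -- positivity propagation
  have hstep : ∀ n (j : Fin m), 0 < (A ^ n) j i₀ → 0 < (A ^ (n+1)) j i₀ := by
    intro n j h
    rw [pow_succ', Matrix.mul_apply]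
    refine Finset.sum_pos' (fun l _ => mul_nonneg (hAnn j l) ((hpowRS n).1 l i₀)) ?_
    exact ⟨j, Finset.mem_univ j, mul_pos (hAdiag_pos j) h⟩
  have hmono : ∀ n k (j : Fin m), 0 < (A ^ n) j i₀ → 0 < (A ^ (n+k)) j i₀ := by
    intro n k
    induction k with
    | zero => intro j h; rw [Nat.add_zero]; exact h
    | succ p ih =>
        intro j h
        have h2 := hstep (n + p) j (ih j h)
        rw [show n + (p + 1) = n + p + 1 from rfl]
        exact h2
  -- every node reachable in some number of steps
  have hreach : ∀ j : Fin m, ∃ n, 0 < (A ^ n) j i₀ := by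
    intro j
    induction hi₀ j with
    | refl => exact ⟨0, by simp⟩
    | @tail b c _ hbc ih =>
        obtain ⟨n, hn⟩ := ih
        refine ⟨n + 1, ?_⟩
        rw [pow_succ', Matrix.mul_apply]
        refine Finset.sum_pos' (fun l _ => mul_nonneg (hAnn c l) ((hpowRS n).1 l i₀)) ?_
        exact ⟨b, Finset.mem_univ b, mul_pos (hedge b c hbc).2 hn⟩
  choose nn hnn using hreach
  set N : ℕ := 1 + Finset.univ.sup nn with hNdef
  have hNpos : 0 < N := Nat.lt_of_lt_of_le Nat.zero_lt_one (Nat.le_add_right 1 _)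
  have hcol : ∀ j, 0 < (A ^ N) j i₀ := by
    intro j
    have hle : nn j ≤ N := le_trans (Finset.le_sup (Finset.mem_univ j)) (Nat.le_add_left _ 1)
    have : N = nn j + (N - nn j) := (Nat.add_sub_cancel' hle).symm
    rw [this]
    exact hmono (nn j) (N - nn j) j (hnn j)
  set δ : ℝ := Finset.univ.inf' Finset.univ_nonempty (fun j => (A ^ N) j i₀) with hδdef
  have hδpos : 0 < δ := by
    rw [hδdef, Finset.lt_inf'_iff]
    exact fun j _ => hcol j
  have hδle : ∀ j, δ ≤ (A ^ N) j i₀ := fun j => Finset.inf'_le _ (Finset.mem_univ j)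
  have hδ1 : δ ≤ 1 := (hδle i₀).trans ((hpowRS N).entry_le_one i₀ i₀)
  -- per-column convergence
  have key : ∀ j : Fin m, ∃ c : ℝ, ∀ i, Tendsto (fun k => (A ^ k) i j) atTop (nhds c) := by
    intro j
    set x : ℕ → Fin m → ℝ := fun k i => (A ^ k) i j with hxdef
    have hx : ∀ n k, x (n + k) = (A ^ n).mulVec (x k) := by
      intro n k
      funext i
      simp only [hxdef, pow_add, Matrix.mul_apply, Matrix.mulVec, dotProduct]
    set Mf : ℕ → ℝ := fun k => Finset.univ.sup' Finset.univ_nonempty (x k) with hMfdef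
    set mf : ℕ → ℝ := fun k => Finset.univ.inf' Finset.univ_nonempty (x k) with hmfdef
    have hMa : ∀ k n, Mf (n + k) ≤ Mf k := by
      intro k n
      rw [hMfdef]
      simp only
      rw [hx n k]
      exact Finset.sup'_le _ _ fun i _ => mulVec_le_sup' (hpowRS n) (x k) i
    have hma : ∀ k n, mf k ≤ mf (n + k) := by
      intro k n
      rw [hmfdef]
      simp only
      rw [hx n k]
      exact Finset.le_inf' _ _ fun i _ => inf'_le_mulVec (hpowRS n) (x k) i
    have hManti : Antitone Mf := by
      intro a b hab
      have : b = (b - a) + a := (Nat.sub_add_cancel hab).symm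
      rw [this]
      exact hMa a (b - a)
    have hmmono : Monotone mf := by
      intro a b hab
      have : b = (b - a) + a := (Nat.sub_add_cancel hab).symm
      rw [this]
      exact hma a (b - a)
    have hmM : ∀ k, mf k ≤ Mf k := fun k =>
      le_trans (Finset.inf'_le (x k) (Finset.mem_univ i₀)) (Finset.le_sup' (x k) (Finset.mem_univ i₀))
    have hosc : ∀ k, Mf (k + N) - mf (k + N) ≤ (1 - δ) * (Mf k - mf k) := by
      intro k
      rw [add_comm k N]
      have hxNk := hx N k
      have := contraction_s6 (hpowRS N) i₀ δ hδle (x k)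
      rw [← hxNk] at this
      exact this
    have hoscq : ∀ q, Mf (q * N) - mf (q * N) ≤ (1 - δ) ^ q * (Mf 0 - mf 0) := by
      intro q
      induction q with
      | zero => simp
      | succ p ih =>
          have h1 : (p + 1) * N = p * N + N := by ring
          rw [h1]
          calc Mf (p * N + N) - mf (p * N + N) ≤ (1 - δ) * (Mf (p * N) - mf (p * N)) := hosc _
            _ ≤ (1 - δ) * ((1 - δ) ^ p * (Mf 0 - mf 0)) :=
                mul_le_mul_of_nonneg_left ih (by linarith)
            _ = (1 - δ) ^ (p + 1) * (Mf 0 - mf 0) := by ring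
    have hosc_anti : Antitone (fun k => Mf k - mf k) := fun a b hab =>
      sub_le_sub (hManti hab) (hmmono hab)
    have hdivtop : Tendsto (fun k : ℕ => k / N) atTop atTop := by
      apply tendsto_atTop_atTop.mpr
      intro b
      refine ⟨b * N, fun a ha => ?_⟩
      rw [Nat.le_div_iff_mul_le hNpos]
      exact ha
    have hgeo : Tendsto (fun k : ℕ => (1 - δ) ^ (k / N) * (Mf 0 - mf 0)) atTop (nhds 0) := by
      have h1 : Tendsto (fun q : ℕ => (1 - δ) ^ q) atTop (nhds 0) :=
        tendsto_pow_atTop_nhds_zero_of_lt_one (by linarith) (by linarith)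
      have h2 := (h1.comp hdivtop).mul_const (Mf 0 - mf 0)
      simpa using h2
    have htend0 : Tendsto (fun k => Mf k - mf k) atTop (nhds 0) := by
      apply squeeze_zero (fun k => by linarith [hmM k]) (g := fun k : ℕ => (1 - δ) ^ (k / N) * (Mf 0 - mf 0))
        (fun k => ?_) hgeo
      calc Mf k - mf k ≤ Mf (k / N * N) - mf (k / N * N) :=
            hosc_anti (Nat.div_mul_le_self k N)
        _ ≤ (1 - δ) ^ (k / N) * (Mf 0 - mf 0) := hoscq _
    have hbdd : BddBelow (Set.range Mf) := by
      refine ⟨mf 0, ?_⟩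
      rintro y ⟨k, rfl⟩
      exact le_trans (hmmono (Nat.zero_le k)) (hmM k)
    have hMconv : Tendsto Mf atTop (nhds (⨅ k, Mf k)) := tendsto_atTop_ciInf hManti hbdd
    set c := ⨅ k, Mf k with hcdef
    have hmconv : Tendsto mf atTop (nhds c) := by
      have := hMconv.sub htend0
      simpa using this
    refine ⟨c, fun i => ?_⟩
    exact tendsto_of_tendsto_of_tendsto_of_le_of_le hmconv hMconv
      (fun k => Finset.inf'_le (x k) (Finset.mem_univ i))
      (fun k => Finset.le_sup' (x k) (Finset.mem_univ i))
  choose η hη using key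
  -- basic properties of η
  have hηnn : ∀ j, 0 ≤ η j := by
    intro j
    exact ge_of_tendsto' (hη j i₀) (fun k => (hpowRS k).1 i₀ j)
  have hηsum : ∑ j, η j = 1 := by
    have h1 : Tendsto (fun k => ∑ j, (A ^ k) i₀ j) atTop (nhds (∑ j, η j)) :=
      tendsto_finset_sum _ (fun j _ => hη j i₀)
    have h2 : (fun k => ∑ j, (A ^ k) i₀ j) = fun _ => (1:ℝ) := funext fun k => (hpowRS k).2 i₀
    rw [h2] at h1
    exact (tendsto_nhds_unique tendsto_const_nhds h1).symm
  have hfix : η ᵥ* A = η := by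
    funext j
    have h1 : Tendsto (fun k => (A ^ (k+1)) i₀ j) atTop (nhds (η j)) :=
      (tendsto_add_atTop_iff_nat 1).mpr (hη j i₀)
    have h2 : (fun k => (A ^ (k+1)) i₀ j) = fun k => ∑ l, (A ^ k) i₀ l * A l j := by
      funext k
      rw [pow_succ, Matrix.mul_apply]
    rw [h2] at h1
    have h3 : Tendsto (fun k => ∑ l, (A ^ k) i₀ l * A l j) atTop (nhds (∑ l, η l * A l j)) :=
      tendsto_finset_sum _ (fun l _ => (hη l i₀).mul_const _)
    have h4 : ∑ l, η l * A l j = η j := tendsto_nhds_unique h3 h1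
    rw [Matrix.vecMul, dotProduct]
    exact h4
  have hηL : η ᵥ* L = 0 := by
    have h1 : η ᵥ* A = η + T₀ • (η ᵥ* L) := by
      rw [hAdef, Matrix.vecMul_add, Matrix.vecMul_one, vecMul_smul_right]
    rw [hfix] at h1
    have h2 : T₀ • (η ᵥ* L) = 0 := by
      have := congrArg (fun v => v - η) h1
      simpa using this.symm
    rcases smul_eq_zero.mp h2 with h | h
    · exact absurd h hT₀_pos.ne'
    · exact h
  -- final limit
  refine ⟨hAnn, hArow, hAdiag_pos, hAtree, η, hηL, hηnn, hηsum, ?_⟩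
  refine tendsto_pi_nhds.mpr ?_
  intro i
  rw [tendsto_pi_nhds]
  intro j
  simpa using hη j i
end

section
/- Let L̃ be an m×m irreducible Laplacian (zero row sums, nonnegative off-diagonal entries) with positive left null vector ξ, Ξ = diag(ξ), and let D = diag(D₁,...,D_m) be a diagonal negative semi-definite matrix with at least one D_i < 0. Then Ξ(L̃ + D) is negative definite, i.e., yᵀΞ(L̃+D)y < 0 for every nonzero y ∈ R^m. -/
open Matrix

/-- Irreducibility / strong connectivity of the digraph of `M`. -/
def StronglyConnectedM {m : ℕ} (M : Matrix (Fin m) (Fin m) ℝ) : Prop :=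
  ∀ i j : Fin m, Relation.ReflTransGen (edgeM M) i j

/-- If `L̃` is an irreducible Laplacian with positive left null vector `ξ`, and `D` is a
diagonal negative semidefinite matrix with at least one strictly negative entry, then
`Ξ(L̃ + D)` is negative definite: `yᵀ Ξ (L̃ + D) y < 0` for all `y ≠ 0`. -/
theorem xi_block_negative_definite
    {m : ℕ} [NeZero m]
    (Lt : Matrix (Fin m) (Fin m) ℝ)
    (h_offdiag : ∀ i j, i ≠ j → 0 ≤ Lt i j)
    (h_rowsum : ∀ i, ∑ j, Lt i j = 0)
    (h_irred : StronglyConnectedM Lt)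
    (ξ : Fin m → ℝ)
    (hξ_pos : ∀ i, 0 < ξ i)
    (hξL : ξ ᵥ* Lt = 0)
    (hξ_sum : ∑ i, ξ i = 1)
    (d : Fin m → ℝ)
    (hd_nonpos : ∀ i, d i ≤ 0)
    (hd_neg : ∃ i, d i < 0) :
    ∀ y : Fin m → ℝ, y ≠ 0 →
      y ⬝ᵥ ((Matrix.diagonal ξ * (Lt + Matrix.diagonal d)) *ᵥ y) < 0 := by
  classical
  intro y hy
  set S : ℝ := ∑ i, ∑ j, ξ i * Lt i j * (y i - y j) ^ 2 with hSdef
  set T : ℝ := ∑ i, ξ i * d i * y i ^ 2 with hTdef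
  set C : ℝ := ∑ i, ∑ j, ξ i * Lt i j * (y i * y j) with hCdef
  have hcol : ∀ j, ∑ i, ξ i * Lt i j = 0 := by
    intro j
    have := congrFun hξL j
    simpa [vecMul, dotProduct] using this
  have hrowsq : ∀ i, ∑ j, ξ i * Lt i j * y i ^ 2 = 0 := by
    intro i
    have h : ∑ j, ξ i * Lt i j * y i ^ 2 = ξ i * y i ^ 2 * ∑ j, Lt i j := by
      rw [Finset.mul_sum]; exact Finset.sum_congr rfl fun j _ => by ring
    rw [h, h_rowsum, mul_zero]
  have hcolsq : ∑ i, ∑ j, ξ i * Lt i j * y j ^ 2 = 0 := by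
    rw [Finset.sum_comm]
    refine Finset.sum_eq_zero fun j _ => ?_
    rw [← Finset.sum_mul, hcol, zero_mul]
  have hSC : S = -2 * C := by
    have h1 : S = ∑ i, ∑ j, (ξ i * Lt i j * y i ^ 2 + ξ i * Lt i j * y j ^ 2
        - 2 * (ξ i * Lt i j * (y i * y j))) := by
      refine Finset.sum_congr rfl fun i _ => Finset.sum_congr rfl fun j _ => by ring
    rw [h1]
    simp only [Finset.sum_sub_distrib, Finset.sum_add_distrib, ← Finset.mul_sum]
    rw [Finset.sum_congr rfl fun i _ => hrowsq i]
    simp only [Finset.sum_const_zero, zero_add]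
    rw [hcolsq, ← hCdef]
    ring
  have hQ : y ⬝ᵥ ((Matrix.diagonal ξ * (Lt + Matrix.diagonal d)) *ᵥ y) = C + T := by
    simp only [dotProduct, mulVec, dotProduct, Matrix.diagonal_mul, Matrix.add_apply,
      Matrix.diagonal_apply]
    have key : ∀ i, y i * ∑ j, ξ i * (Lt i j + if i = j then d i else 0) * y j
        = (∑ j, ξ i * Lt i j * (y i * y j)) + ξ i * d i * y i ^ 2 := by
      intro i
      have h2 : ∑ j, ξ i * (Lt i j + if i = j then d i else 0) * y j
          = (∑ j, ξ i * Lt i j * y j) + ξ i * d i * y i := by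
        have : ∀ j, ξ i * (Lt i j + if i = j then d i else 0) * y j
            = ξ i * Lt i j * y j + (if i = j then ξ i * d i * y j else 0) := by
          intro j; split_ifs <;> ring
        rw [Finset.sum_congr rfl fun j _ => this j, Finset.sum_add_distrib,
          Finset.sum_ite_eq]
        simp
      rw [h2, mul_add, Finset.mul_sum]
      rw [Finset.sum_congr rfl fun j _ =>
        show y i * (ξ i * Lt i j * y j) = ξ i * Lt i j * (y i * y j) from by ring]
      ring
    rw [Finset.sum_congr rfl fun i _ => key i, Finset.sum_add_distrib]
  rw [hQ]
  have hSnn : ∀ i ∈ Finset.univ, (0:ℝ) ≤ ∑ j, ξ i * Lt i j * (y i - y j) ^ 2 := by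
    intro i _
    refine Finset.sum_nonneg fun j _ => ?_
    by_cases h : i = j
    · subst h; simp
    · exact mul_nonneg (mul_nonneg (hξ_pos i).le (h_offdiag i j h)) (sq_nonneg _)
  have hSinn : ∀ i, ∀ j ∈ Finset.univ, (0:ℝ) ≤ ξ i * Lt i j * (y i - y j) ^ 2 := by
    intro i j _
    by_cases h : i = j
    · subst h; simp
    · exact mul_nonneg (mul_nonneg (hξ_pos i).le (h_offdiag i j h)) (sq_nonneg _)
  have hTnp : ∀ i ∈ Finset.univ, ξ i * d i * y i ^ 2 ≤ 0 := fun i _ =>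
    mul_nonpos_of_nonpos_of_nonneg
      (mul_nonpos_of_nonneg_of_nonpos (hξ_pos i).le (hd_nonpos i)) (sq_nonneg _)
  have hS0 : 0 ≤ S := Finset.sum_nonneg hSnn
  have hT0 : T ≤ 0 := Finset.sum_nonpos hTnp
  have hCval : C = -(S / 2) := by rw [hSC]; ring
  by_contra hnot
  push_neg at hnot
  have hQ0 : C + T = 0 := le_antisymm (by rw [hCval]; linarith) hnot
  have hSz : S = 0 := by rw [hCval] at hQ0; linarith
  have hTz : T = 0 := by rw [hCval] at hQ0; linarith
  -- termwise vanishing of S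
  have houter : ∀ i, ∑ j, ξ i * Lt i j * (y i - y j) ^ 2 = 0 := by
    intro i
    exact (Finset.sum_eq_zero_iff_of_nonneg hSnn).mp hSz i (Finset.mem_univ i)
  have hterm : ∀ i j, ξ i * Lt i j * (y i - y j) ^ 2 = 0 := fun i j =>
    (Finset.sum_eq_zero_iff_of_nonneg (hSinn i)).mp (houter i) j (Finset.mem_univ j)
  -- edges force equality
  have hedge : ∀ a b, edgeM Lt a b → y b = y a := by
    rintro a b ⟨hne, hpos⟩
    have h := hterm b a
    have hp : 0 < ξ b * Lt b a := mul_pos (hξ_pos b) hpos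
    have hsq : (y b - y a) ^ 2 = 0 := by
      rcases mul_eq_zero.mp h with h' | h'
      · exact absurd h' hp.ne'
      · exact h'
    have := pow_eq_zero_iff (n := 2) (by norm_num) |>.mp hsq
    linarith [sub_eq_zero.mp this]
  have hconst : ∀ a b, Relation.ReflTransGen (edgeM Lt) a b → y a = y b := by
    intro a b h
    induction h with
    | refl => rfl
    | tail _ e ih => rw [ih, ← hedge _ _ e]
  -- y vanishes at the strictly negative d index
  obtain ⟨i0, hi0⟩ := hd_neg
  have hTterm : ∀ i, ξ i * d i * y i ^ 2 = 0 := by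
    intro i
    have hsum : ∑ i, -(ξ i * d i * y i ^ 2) = 0 := by
      rw [Finset.sum_neg_distrib, ← hTdef, hTz, neg_zero]
    have := (Finset.sum_eq_zero_iff_of_nonneg
      (fun i _ => neg_nonneg.mpr (hTnp i (Finset.mem_univ i)))).mp hsum i (Finset.mem_univ i)
    linarith
  have hy0 : y i0 = 0 := by
    have h := hTterm i0
    have hp : ξ i0 * d i0 < 0 :=
      mul_neg_of_pos_of_neg (hξ_pos i0) hi0
    have : y i0 ^ 2 = 0 := by
      rcases mul_eq_zero.mp h with h' | h'
      · exact absurd h' hp.ne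
      · exact h'
    exact pow_eq_zero_iff (n := 2) (by norm_num) |>.mp this
  apply hy
  funext k
  have := hconst i0 k (h_irred i0 k)
  simp [← this, hy0]
end

section
/- Let L be the irreducible Laplacian of a strongly connected weighted digraph, ξ > 0 with ξᵀL = 0, ∑ξᵢ = 1, Ξ = diag(ξ), R = (1/2)(ΞL + LᵀΞ). Consider ẋ(t) = Lx(t_k) on [t_k, t_{k+1}) and V(t) = (1/2)(x(t) − x̄𝟏)ᵀΞ(x(t) − x̄𝟏) with x̄ = ξᵀx(0). Then for any a > 0 and t ∈ [t_k, t_{k+1}): dV/dt ≤ −(1 − aβ_m/(2λ₂)) xᵀ(t)(−R)x(t) + (1/(2a))‖x(t_k) − x(t)‖², where λ₂ is the smallest positive eigenvalue of −R and β_m is the largest eigenvalue of ΞLLᵀΞ. -/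
open Matrix

private lemma dot_self_nonneg' {m : ℕ} (w : Fin m → ℝ) : 0 ≤ w ⬝ᵥ w :=
  Finset.sum_nonneg fun i _ => mul_self_nonneg _

private lemma dot_transpose_mulVec {m : ℕ} (B : Matrix (Fin m) (Fin m) ℝ) (v : Fin m → ℝ) :
    v ⬝ᵥ (Bᵀ *ᵥ v) = v ⬝ᵥ (B *ᵥ v) := by
  rw [Matrix.dotProduct_mulVec, Matrix.vecMul_transpose, dotProduct_comm]

private lemma inner_eq_dot {m : ℕ} (u v : EuclideanSpace ℝ (Fin m)) :
    (inner ℝ u v : ℝ) = (⇑u) ⬝ᵥ (⇑v) := by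
  simp [PiLp.inner_apply, dotProduct, RCLike.inner_apply]
  exact Finset.sum_congr rfl fun _ _ => mul_comm _ _

private lemma quad_eigen_expand {m : ℕ} {N : Matrix (Fin m) (Fin m) ℝ} (hN : N.IsHermitian)
    (y : Fin m → ℝ) :
    y ⬝ᵥ (N *ᵥ y) = ∑ i, hN.eigenvalues i * ((⇑(hN.eigenvectorBasis i)) ⬝ᵥ y) ^ 2 ∧
      y ⬝ᵥ y = ∑ i, ((⇑(hN.eigenvectorBasis i)) ⬝ᵥ y) ^ 2 := by
  classical
  set b := hN.eigenvectorBasis with hb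
  have hNT : Nᵀ = N := by
    rw [← Matrix.conjTranspose_eq_transpose_of_trivial]; exact hN
  set Y : EuclideanSpace ℝ (Fin m) := (WithLp.equiv 2 (Fin m → ℝ)).symm y with hY
  have hYc : (⇑Y : Fin m → ℝ) = y := rfl
  set NY : EuclideanSpace ℝ (Fin m) := (WithLp.equiv 2 (Fin m → ℝ)).symm (N *ᵥ y) with hNY
  have hNYc : (⇑NY : Fin m → ℝ) = N *ᵥ y := rfl
  have hbin : ∀ i, (inner ℝ (b i) Y : ℝ) = (⇑(b i)) ⬝ᵥ y := by
    intro i; rw [inner_eq_dot, hYc]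
  have hbin' : ∀ i, (inner ℝ Y (b i) : ℝ) = (⇑(b i)) ⬝ᵥ y := by
    intro i; rw [real_inner_comm]; exact hbin i
  constructor
  · have h := b.sum_inner_mul_inner Y NY
    have hr : (inner ℝ Y NY : ℝ) = y ⬝ᵥ (N *ᵥ y) := by rw [inner_eq_dot, hYc, hNYc]
    rw [hr] at h
    rw [← h]
    refine Finset.sum_congr rfl fun i _ => ?_
    have h1 : (inner ℝ (b i) NY : ℝ) = hN.eigenvalues i * ((⇑(b i)) ⬝ᵥ y) := by
      rw [inner_eq_dot, hNYc]
      rw [Matrix.dotProduct_mulVec, ← Matrix.mulVec_transpose, hNT,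
        hN.mulVec_eigenvectorBasis, smul_dotProduct]
      simp
      exact Or.inl rfl
    rw [h1, hbin' i]; ring
  · have h := b.sum_inner_mul_inner Y Y
    have hr : (inner ℝ Y Y : ℝ) = y ⬝ᵥ y := by rw [inner_eq_dot, hYc]
    rw [hr] at h
    rw [← h]
    refine Finset.sum_congr rfl fun i _ => ?_
    rw [hbin' i, hbin i]; ring

private lemma quad_le_of_eigen_le {m : ℕ} {Qm : Matrix (Fin m) (Fin m) ℝ} (hQ : Qm.IsHermitian)
    (β : ℝ) (hβ : ∀ i, hQ.eigenvalues i ≤ β) (y : Fin m → ℝ) :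
    y ⬝ᵥ (Qm *ᵥ y) ≤ β * (y ⬝ᵥ y) := by
  obtain ⟨h1, h2⟩ := quad_eigen_expand hQ y
  rw [h1, h2, Finset.mul_sum]
  exact Finset.sum_le_sum fun i _ => mul_le_mul_of_nonneg_right (hβ i) (sq_nonneg _)

private lemma quad_ge_of_eigen {m : ℕ} {N : Matrix (Fin m) (Fin m) ℝ} (hN : N.IsHermitian)
    (lam : ℝ) (hev : ∀ i, hN.eigenvalues i = 0 ∨ lam ≤ hN.eigenvalues i)
    (hker : ∀ v : Fin m → ℝ, N *ᵥ v = 0 → ∀ j k, v j = v k)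
    (y : Fin m → ℝ) (hy : ∑ i, y i = 0) :
    lam * (y ⬝ᵥ y) ≤ y ⬝ᵥ (N *ᵥ y) := by
  obtain ⟨h1, h2⟩ := quad_eigen_expand hN y
  rw [h1, h2, Finset.mul_sum]
  refine Finset.sum_le_sum fun i _ => ?_
  rcases hev i with h0 | hl
  · have hv0 : N *ᵥ ⇑(hN.eigenvectorBasis i) = 0 := by
      rw [hN.mulVec_eigenvectorBasis, h0, zero_smul]
    have hconst := hker _ hv0
    have hz : (⇑(hN.eigenvectorBasis i)) ⬝ᵥ y = 0 := by
      unfold dotProduct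
      calc ∑ j, hN.eigenvectorBasis i j * y j
          = ∑ j, hN.eigenvectorBasis i i * y j :=
            Finset.sum_congr rfl fun j _ => congrArg (· * y j) (hconst j i)
        _ = hN.eigenvectorBasis i i * ∑ j, y j := by rw [Finset.mul_sum]
        _ = 0 := by rw [hy, mul_zero]
    rw [hz, h0]; simp
  · exact mul_le_mul_of_nonneg_right hl (sq_nonneg _)

private lemma quad_graph {m : ℕ} (A L R : Matrix (Fin m) (Fin m) ℝ)
    (hL : L = A - Matrix.diagonal (fun i => ∑ j, A i j))
    (ξ : Fin m → ℝ) (hξL : ξ ᵥ* L = 0)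
    (hR : R = (1/2 : ℝ) • (Matrix.diagonal ξ * L + Lᵀ * Matrix.diagonal ξ))
    (v : Fin m → ℝ) :
    v ⬝ᵥ ((-R) *ᵥ v) = (1/2) * ∑ i, ∑ j, ξ i * A i j * (v i - v j)^2 := by
  classical
  set s : Fin m → ℝ := fun i => ∑ j, A i j with hs
  -- column sums identity
  have hcol : ∀ j, ∑ i, ξ i * A i j = ξ j * s j := by
    intro j
    have h := congrFun hξL j
    have h2 : (ξ ᵥ* L) j = (∑ i, ξ i * A i j) - ξ j * s j := by
      rw [hL]
      simp only [Matrix.vecMul, dotProduct, Matrix.sub_apply, Matrix.diagonal_apply,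
        mul_sub, Finset.sum_sub_distrib, mul_ite, mul_zero]
      simp [Finset.sum_ite_eq, hs]
    rw [h2] at h
    have h0 : (0 : Fin m → ℝ) j = 0 := rfl
    rw [h0] at h
    linarith
  -- quadratic form of R equals that of diagonal ξ * L
  have hsym : v ⬝ᵥ (R *ᵥ v) = v ⬝ᵥ ((Matrix.diagonal ξ * L) *ᵥ v) := by
    have ht : Lᵀ * Matrix.diagonal ξ = (Matrix.diagonal ξ * L)ᵀ := by
      rw [Matrix.transpose_mul, Matrix.diagonal_transpose]
    rw [hR, ht, Matrix.smul_mulVec, dotProduct_smul, Matrix.add_mulVec,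
      dotProduct_add, dot_transpose_mulVec]
    simp [smul_eq_mul]; ring
  -- expand to double sums
  have hexp : v ⬝ᵥ ((Matrix.diagonal ξ * L) *ᵥ v)
      = (∑ i, ∑ j, ξ i * A i j * (v i * v j)) - ∑ i, ξ i * s i * (v i)^2 := by
    rw [← Matrix.mulVec_mulVec, ← Finset.sum_sub_distrib]
    unfold dotProduct
    refine Finset.sum_congr rfl fun i _ => ?_
    rw [Matrix.mulVec_diagonal]
    have hLv : (L *ᵥ v) i = (∑ j, A i j * v j) - s i * v i := by
      rw [hL, Matrix.sub_mulVec]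
      simp only [Pi.sub_apply, Matrix.mulVec_diagonal]
      rfl
    rw [hLv]
    have e1 : ∑ j, ξ i * A i j * (v i * v j) = v i * (ξ i * ∑ j, A i j * v j) := by
      rw [Finset.mul_sum, Finset.mul_sum]
      try exact Finset.sum_congr rfl fun j _ => by ring
    rw [e1]
    ring
  have hT1 : ∑ i, ∑ j, ξ i * A i j * (v i)^2 = ∑ i, ξ i * s i * (v i)^2 := by
    refine Finset.sum_congr rfl fun i _ => ?_
    have hrfl : ξ i * s i * (v i)^2 = ξ i * (∑ j, A i j) * (v i)^2 := rfl
    rw [hrfl, Finset.mul_sum, Finset.sum_mul]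
    try exact Finset.sum_congr rfl fun j _ => by ring
  have hT2 : ∑ i, ∑ j, ξ i * A i j * (v j)^2 = ∑ i, ξ i * s i * (v i)^2 := by
    rw [Finset.sum_comm]
    refine Finset.sum_congr rfl fun j _ => ?_
    rw [← hcol j, Finset.sum_mul]
    try exact Finset.sum_congr rfl fun i _ => by ring
  have hRHS : ∑ i, ∑ j, ξ i * A i j * (v i - v j)^2
      = 2 * (∑ i, ξ i * s i * (v i)^2) - 2 * ∑ i, ∑ j, ξ i * A i j * (v i * v j) := by
    have hsplit : ∀ i j, ξ i * A i j * (v i - v j)^2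
        = ξ i * A i j * (v i)^2 + ξ i * A i j * (v j)^2 - 2 * (ξ i * A i j * (v i * v j)) := by
      intro i j; ring
    calc ∑ i, ∑ j, ξ i * A i j * (v i - v j)^2
        = ∑ i, ∑ j, (ξ i * A i j * (v i)^2 + ξ i * A i j * (v j)^2
            - 2 * (ξ i * A i j * (v i * v j))) :=
          Finset.sum_congr rfl fun i _ => Finset.sum_congr rfl fun j _ => hsplit i j
      _ = (∑ i, ∑ j, ξ i * A i j * (v i)^2) + (∑ i, ∑ j, ξ i * A i j * (v j)^2)
            - 2 * ∑ i, ∑ j, ξ i * A i j * (v i * v j) := by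
          simp only [Finset.sum_add_distrib, Finset.sum_sub_distrib, Finset.mul_sum]
      _ = _ := by rw [hT1, hT2]; ring
  have hneg : v ⬝ᵥ ((-R) *ᵥ v) = -(v ⬝ᵥ (R *ᵥ v)) := by
    rw [Matrix.neg_mulVec, dotProduct_neg]
  rw [hneg, hsym, hexp, hRHS]
  ring

/-- Derivative bound on the Lyapunov function `V(t) = ½(x(t) - x̄𝟏)ᵀΞ(x(t) - x̄𝟏)` along
the zero-order-hold dynamics `ẋ = L x(t_k)` on `[t_k, t_{k+1})`: for any `a > 0`,
`dV/dt ≤ -(1 - aβ_m/(2λ₂)) xᵀ(t)(-R)x(t) + (1/(2a))‖x(t_k) - x(t)‖²`. -/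
theorem lyapunov_derivative_bound
    {m : ℕ} [NeZero m]
    (A D L : Matrix (Fin m) (Fin m) ℝ)
    (hA_nonneg : ∀ i j, 0 ≤ A i j) (hA_diag : ∀ i, A i i = 0)
    (hD : D = Matrix.diagonal (fun i => ∑ j, A i j)) (hL : L = A - D)
    (hSC : StronglyConnected A)
    (ξ : Fin m → ℝ) (hξ_pos : ∀ i, 0 < ξ i) (hξL : ξ ᵥ* L = 0) (hξ_sum : ∑ i, ξ i = 1)
    (R Q : Matrix (Fin m) (Fin m) ℝ)
    (hR : R = (1/2 : ℝ) • (Matrix.diagonal ξ * L + Lᵀ * Matrix.diagonal ξ))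
    (hQ : Q = Matrix.diagonal ξ * L * Lᵀ * Matrix.diagonal ξ)
    (lam₂ betam : ℝ)
    (hlam₂_mem : lam₂ ∈ spectrum ℝ (-R)) (hlam₂_pos : 0 < lam₂)
    (hlam₂_min : ∀ μ ∈ spectrum ℝ (-R), 0 < μ → lam₂ ≤ μ)
    (hbetam_mem : betam ∈ spectrum ℝ Q)
    (hbetam_max : ∀ μ ∈ spectrum ℝ Q, μ ≤ betam)
    (tk tk1 : ℝ) (htk : tk < tk1)
    (x : ℝ → Fin m → ℝ)
    (hx : ∀ t ∈ Set.Ico tk tk1, HasDerivAt x (L *ᵥ x tk) t)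
    (V : ℝ → ℝ)
    (hV : V = fun t => (1/2 : ℝ) *
      ((x t - fun _ => ξ ⬝ᵥ x 0) ⬝ᵥ (Matrix.diagonal ξ *ᵥ (x t - fun _ => ξ ⬝ᵥ x 0)))) :
    ∀ a : ℝ, 0 < a → ∀ t ∈ Set.Ico tk tk1,
      ∃ v : ℝ, HasDerivAt V v t ∧
        v ≤ -(1 - a * betam / (2 * lam₂)) * (x t ⬝ᵥ ((-R) *ᵥ x t))
            + (1 / (2 * a)) * ((x tk - x t) ⬝ᵥ (x tk - x t)) := by
  classical
  intro a ha t ht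
  have hL' : L = A - Matrix.diagonal (fun i => ∑ j, A i j) := by rw [hL, hD]
  -- the graph quadratic form identity for -R
  have hgraph := quad_graph A L R hL' ξ hξL hR
  -- -R is positive semidefinite (quadratic form)
  have hNpsd : ∀ v : Fin m → ℝ, 0 ≤ v ⬝ᵥ ((-R) *ᵥ v) := by
    intro v
    rw [hgraph v]
    refine mul_nonneg (by norm_num) (Finset.sum_nonneg fun i _ =>
      Finset.sum_nonneg fun j _ => ?_)
    exact mul_nonneg (mul_nonneg (hξ_pos i).le (hA_nonneg i j)) (sq_nonneg _)
  -- kernel of -R consists of constant vectors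
  have hker : ∀ v : Fin m → ℝ, (-R) *ᵥ v = 0 → ∀ j k, v j = v k := by
    intro v hv j k
    have hq : v ⬝ᵥ ((-R) *ᵥ v) = 0 := by rw [hv, dotProduct_zero]
    rw [hgraph v] at hq
    have hsum0 : ∑ i, ∑ j, ξ i * A i j * (v i - v j)^2 = 0 := by linarith
    have hnn : ∀ i ∈ Finset.univ, (0:ℝ) ≤ ∑ j, ξ i * A i j * (v i - v j)^2 :=
      fun i _ => Finset.sum_nonneg fun j _ =>
        mul_nonneg (mul_nonneg (hξ_pos i).le (hA_nonneg i j)) (sq_nonneg _)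
    have hterm : ∀ i l, ξ i * A i l * (v i - v l)^2 = 0 := by
      intro i l
      have h1 := (Finset.sum_eq_zero_iff_of_nonneg hnn).mp hsum0 i (Finset.mem_univ i)
      have hnn2 : ∀ l ∈ Finset.univ, (0:ℝ) ≤ ξ i * A i l * (v i - v l)^2 :=
        fun l _ => mul_nonneg (mul_nonneg (hξ_pos i).le (hA_nonneg i l)) (sq_nonneg _)
      exact (Finset.sum_eq_zero_iff_of_nonneg hnn2).mp h1 l (Finset.mem_univ l)
    have hedge : ∀ p q : Fin m, edge A p q → v q = v p := by
      intro p q hpq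
      have h := hterm q p
      have hpos : 0 < ξ q * A q p := mul_pos (hξ_pos q) hpq
      have hsq : (v q - v p)^2 = 0 := by
        by_contra hc
        have hlt : 0 < ξ q * A q p * (v q - v p)^2 :=
          mul_pos hpos (lt_of_le_of_ne (sq_nonneg _) (Ne.symm hc))
        linarith
      have hvv := pow_eq_zero_iff (n := 2) (by norm_num) |>.mp hsq
      linarith [sub_eq_zero.mp hvv]
    have hchain : ∀ p q : Fin m, Relation.ReflTransGen (edge A) p q → v p = v q := by
      intro p q h
      induction h with
      | refl => rfl
      | tail _ hbc ih => rw [ih, hedge _ _ hbc]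
    exact hchain j k (hSC j k)
  -- Hermitian structure
  have hRh : R.IsHermitian := by
    rw [Matrix.IsHermitian, Matrix.conjTranspose_eq_transpose_of_trivial, hR]
    rw [Matrix.transpose_smul, Matrix.transpose_add, Matrix.transpose_mul,
      Matrix.transpose_mul, Matrix.diagonal_transpose, Matrix.transpose_transpose,
      add_comm]
  have hNh : (-R).IsHermitian := hRh.neg
  have hNposSemidef : (-R).PosSemidef := by
    refine Matrix.PosSemidef.of_dotProduct_mulVec_nonneg hNh fun v => ?_
    simpa using hNpsd v
  have hNev : ∀ i, hNh.eigenvalues i = 0 ∨ lam₂ ≤ hNh.eigenvalues i := by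
    intro i
    rcases eq_or_lt_of_le (hNposSemidef.eigenvalues_nonneg i) with h | h
    · exact Or.inl h.symm
    · exact Or.inr (hlam₂_min _ (hNh.eigenvalues_mem_spectrum_real i) h)
  -- Q is Hermitian PSD
  have hQeq : Q = (Matrix.diagonal ξ * L) * (Matrix.diagonal ξ * L)ᴴ := by
    rw [Matrix.conjTranspose_eq_transpose_of_trivial, Matrix.transpose_mul,
      Matrix.diagonal_transpose, hQ, Matrix.mul_assoc, Matrix.mul_assoc]
  have hQpsd : Q.PosSemidef := by rw [hQeq]; exact Matrix.posSemidef_self_mul_conjTranspose _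
  have hQh : Q.IsHermitian := hQpsd.1
  have hQev : ∀ i, hQh.eigenvalues i ≤ betam :=
    fun i => hbetam_max _ (hQh.eigenvalues_mem_spectrum_real i)
  have hm : 0 < m := Nat.pos_of_ne_zero (NeZero.ne m)
  have hbeta_nonneg : 0 ≤ betam :=
    le_trans (hQpsd.eigenvalues_nonneg ⟨0, hm⟩) (hQev ⟨0, hm⟩)
  -- constant vectors are killed by L-type products
  have hone : Matrix.diagonal ξ *ᵥ (fun _ => (1:ℝ)) = ξ := by
    funext i; rw [Matrix.mulVec_diagonal, mul_one]
  have hLone : L *ᵥ (fun _ => (1:ℝ)) = 0 := by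
    funext i
    rw [hL', Matrix.sub_mulVec]
    simp [Matrix.mulVec, dotProduct, Matrix.diagonal_apply, Finset.sum_ite_eq,
      Finset.sum_ite_eq']
  have hLtξ : Lᵀ *ᵥ ξ = 0 := by rw [Matrix.mulVec_transpose, hξL]
  have hNone : ∀ c : ℝ, (-R) *ᵥ (fun _ => c) = 0 := by
    intro c
    have h1 : (fun _ : Fin m => c) = c • (fun _ : Fin m => (1:ℝ)) := by
      funext i; simp
    rw [h1, Matrix.mulVec_smul]
    have h2 : (-R) *ᵥ (fun _ : Fin m => (1:ℝ)) = 0 := by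
      rw [Matrix.neg_mulVec, hR, Matrix.smul_mulVec, Matrix.add_mulVec,
        ← Matrix.mulVec_mulVec, ← Matrix.mulVec_mulVec, hone, hLone]
      simp [Matrix.mulVec_zero, hLtξ]
    rw [h2, smul_zero]
  have hQone : ∀ c : ℝ, Q *ᵥ (fun _ => c) = 0 := by
    intro c
    have h1 : (fun _ : Fin m => c) = c • (fun _ : Fin m => (1:ℝ)) := by
      funext i; simp
    rw [h1, Matrix.mulVec_smul]
    have h2 : Q *ᵥ (fun _ : Fin m => (1:ℝ)) = 0 := by
      rw [hQ, ← Matrix.mulVec_mulVec, hone, ← Matrix.mulVec_mulVec, hLtξ,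
        Matrix.mulVec_zero]
    rw [h2, smul_zero]
  -- shifting by a constant does not change the quadratic forms
  have hshift : ∀ (M : Matrix (Fin m) (Fin m) ℝ), M.IsHermitian →
      (∀ c : ℝ, M *ᵥ (fun _ => c) = 0) → ∀ (z : Fin m → ℝ) (c : ℝ),
      z ⬝ᵥ (M *ᵥ z) = (z - fun _ => c) ⬝ᵥ (M *ᵥ (z - fun _ => c)) := by
    intro M hM hM0 z c
    have hMT : Mᵀ = M := by
      rw [← Matrix.conjTranspose_eq_transpose_of_trivial]; exact hM
    have h1 : M *ᵥ (z - fun _ => c) = M *ᵥ z := by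
      rw [Matrix.mulVec_sub, hM0 c, sub_zero]
    rw [h1, sub_dotProduct]
    have h2 : (fun _ : Fin m => c) ⬝ᵥ (M *ᵥ z) = 0 := by
      rw [Matrix.dotProduct_mulVec, ← Matrix.mulVec_transpose, hMT, hM0 c,
        zero_dotProduct]
    rw [h2, sub_zero]
  -- key spectral inequality
  set z : Fin m → ℝ := x t with hz
  set c0 : ℝ := (∑ i, z i) / m with hc0
  set y : Fin m → ℝ := z - fun _ => c0 with hy
  have hy_sum : ∑ i, y i = 0 := by
    rw [hy]
    simp only [Pi.sub_apply, Finset.sum_sub_distrib, Finset.sum_const, Finset.card_univ,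
      Fintype.card_fin, nsmul_eq_mul, hc0]
    field_simp
    ring
  have hkey : lam₂ * (z ⬝ᵥ (Q *ᵥ z)) ≤ betam * (z ⬝ᵥ ((-R) *ᵥ z)) := by
    rw [hshift Q hQh hQone z c0, hshift (-R) hNh hNone z c0, ← hy]
    have h1 : y ⬝ᵥ (Q *ᵥ y) ≤ betam * (y ⬝ᵥ y) := quad_le_of_eigen_le hQh betam hQev y
    have h2 : lam₂ * (y ⬝ᵥ y) ≤ y ⬝ᵥ ((-R) *ᵥ y) := quad_ge_of_eigen hNh lam₂ hNev hker y hy_sum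
    have h3 := mul_le_mul_of_nonneg_left h1 hlam₂_pos.le
    have h4 := mul_le_mul_of_nonneg_left h2 hbeta_nonneg
    nlinarith
  -- derivative of V
  set xbar : ℝ := ξ ⬝ᵥ x 0 with hxbar
  set u : Fin m → ℝ := L *ᵥ x tk with hu
  have hxt := hx t ht
  have hco : ∀ i, HasDerivAt (fun s => x s i) (u i) t := fun i => hasDerivAt_pi.mp hxt i
  have hVeq : V = fun s => ∑ i, (1/2 * ξ i) * (x s i - xbar)^2 := by
    rw [hV]; funext s
    simp only [dotProduct, Matrix.mulVec_diagonal, Pi.sub_apply, Finset.mul_sum]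
    exact Finset.sum_congr rfl fun i _ => by ring
  have hterm : ∀ i, HasDerivAt (fun s => (1/2 * ξ i) * (x s i - xbar)^2)
      (ξ i * (x t i - xbar) * u i) t := by
    intro i
    have h1 := (((hco i).sub_const xbar).fun_pow 2).const_mul (1/2 * ξ i)
    refine h1.congr_deriv ?_
    push_cast
    ring
  have hder : HasDerivAt V (∑ i, ξ i * (x t i - xbar) * u i) t := by
    rw [hVeq]
    exact HasDerivAt.fun_sum fun i _ => hterm i
  refine ⟨∑ i, ξ i * (x t i - xbar) * u i, hder, ?_⟩
  -- rewrite the derivative value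
  set e : Fin m → ℝ := x tk - x t with he
  have hv1 : ∑ i, ξ i * (x t i - xbar) * u i
      = (z - fun _ => xbar) ⬝ᵥ (Matrix.diagonal ξ *ᵥ u) := by
    simp only [dotProduct, Matrix.mulVec_diagonal, Pi.sub_apply]
    exact Finset.sum_congr rfl fun i _ => by ring
  have hv2 : (z - fun _ => xbar) ⬝ᵥ (Matrix.diagonal ξ *ᵥ u) = z ⬝ᵥ (Matrix.diagonal ξ *ᵥ u) := by
    rw [sub_dotProduct]
    have h0 : (fun _ : Fin m => xbar) ⬝ᵥ (Matrix.diagonal ξ *ᵥ u) = xbar * (ξ ⬝ᵥ u) := by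
      simp only [dotProduct, Matrix.mulVec_diagonal, Finset.mul_sum]
      try exact Finset.sum_congr rfl fun i _ => by ring
    have h1 : ξ ⬝ᵥ u = 0 := by
      rw [hu, Matrix.dotProduct_mulVec, hξL, zero_dotProduct]
    rw [h0, h1, mul_zero, sub_zero]
  have hxtk : x tk = z + e := by rw [he, hz]; abel
  clear_value e
  have hv3 : z ⬝ᵥ (Matrix.diagonal ξ *ᵥ u)
      = z ⬝ᵥ ((Matrix.diagonal ξ * L) *ᵥ z) + z ⬝ᵥ ((Matrix.diagonal ξ * L) *ᵥ e) := by
    rw [hu, hxtk, Matrix.mulVec_add, Matrix.mulVec_add, dotProduct_add,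
      ← Matrix.mulVec_mulVec, ← Matrix.mulVec_mulVec]
  have hRz : z ⬝ᵥ ((Matrix.diagonal ξ * L) *ᵥ z) = -(z ⬝ᵥ ((-R) *ᵥ z)) := by
    have ht2 : Lᵀ * Matrix.diagonal ξ = (Matrix.diagonal ξ * L)ᵀ := by
      rw [Matrix.transpose_mul, Matrix.diagonal_transpose]
    have : z ⬝ᵥ (R *ᵥ z) = z ⬝ᵥ ((Matrix.diagonal ξ * L) *ᵥ z) := by
      rw [hR, ht2, Matrix.smul_mulVec, dotProduct_smul, Matrix.add_mulVec,
        dotProduct_add, dot_transpose_mulVec]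
      simp [smul_eq_mul]; ring
    rw [← this, Matrix.neg_mulVec, dotProduct_neg, neg_neg]
  set p : Fin m → ℝ := (Matrix.diagonal ξ * L)ᵀ *ᵥ z with hp
  have hv4 : z ⬝ᵥ ((Matrix.diagonal ξ * L) *ᵥ e) = p ⬝ᵥ e := by
    rw [Matrix.dotProduct_mulVec, hp, Matrix.mulVec_transpose]
  have hpp : p ⬝ᵥ p = z ⬝ᵥ (Q *ᵥ z) := by
    rw [hp, Matrix.dotProduct_mulVec, Matrix.vecMul_transpose, Matrix.mulVec_mulVec]
    have hQ2 : Matrix.diagonal ξ * L * (Matrix.diagonal ξ * L)ᵀ = Q := by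
      rw [Matrix.transpose_mul, Matrix.diagonal_transpose, hQ, Matrix.mul_assoc,
        Matrix.mul_assoc, Matrix.mul_assoc]
    rw [hQ2, dotProduct_comm]
  -- Young's inequality
  have hyoung : p ⬝ᵥ e ≤ a/2 * (p ⬝ᵥ p) + 1/(2*a) * (e ⬝ᵥ e) := by
    have h0 : 0 ≤ (a • p - e) ⬝ᵥ (a • p - e) := dot_self_nonneg' _
    have hexp : (a • p - e) ⬝ᵥ (a • p - e)
        = a*a*(p ⬝ᵥ p) - 2*a*(p ⬝ᵥ e) + e ⬝ᵥ e := by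
      simp only [sub_dotProduct, dotProduct_sub, smul_dotProduct,
        dotProduct_smul, smul_eq_mul, dotProduct_comm e p]
      ring
    have h0' : 0 ≤ a*a*(p ⬝ᵥ p) - 2*a*(p ⬝ᵥ e) + e ⬝ᵥ e := hexp ▸ h0
    rw [← sub_nonneg]
    have heq : a/2 * (p ⬝ᵥ p) + 1/(2*a) * (e ⬝ᵥ e) - p ⬝ᵥ e
        = (1/(2*a)) * (a*a*(p ⬝ᵥ p) - 2*a*(p ⬝ᵥ e) + e ⬝ᵥ e) := by
      field_simp
      ring
    rw [heq]
    positivity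
  -- spectral bound applied
  have h3 : a/2 * (z ⬝ᵥ (Q *ᵥ z)) ≤ a*betam/(2*lam₂) * (z ⬝ᵥ ((-R) *ᵥ z)) := by
    have h4 := mul_le_mul_of_nonneg_left hkey
      (show (0:ℝ) ≤ a/(2*lam₂) by positivity)
    have e1 : a/(2*lam₂) * (lam₂ * (z ⬝ᵥ (Q *ᵥ z))) = a/2 * (z ⬝ᵥ (Q *ᵥ z)) := by
      field_simp
    have e2 : a/(2*lam₂) * (betam * (z ⬝ᵥ ((-R) *ᵥ z)))
        = a*betam/(2*lam₂) * (z ⬝ᵥ ((-R) *ᵥ z)) := by ring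
    linarith
  -- final assembly
  have hfin : -(1 - a * betam / (2 * lam₂)) * (z ⬝ᵥ ((-R) *ᵥ z))
      = -(z ⬝ᵥ ((-R) *ᵥ z)) + a*betam/(2*lam₂) * (z ⬝ᵥ ((-R) *ᵥ z)) := by ring
  rw [hv1, hv2, hv3, hRz, hv4, hfin]
  have h5 : p ⬝ᵥ e ≤ a/2 * (z ⬝ᵥ (Q *ᵥ z)) + 1/(2*a) * (e ⬝ᵥ e) := by rw [← hpp]; exact hyoung
  linarith
end

section
/- Comparison of self-triggered step sizes: let L be a symmetric Laplacian with simple zero eigenvalue, σ ∈ (0,1), and x with Lx ≠ 0. Define τ¹ = σ·(xᵀL²x)/(−xᵀL³x) and let e(τ) = τLx. Then ‖e(τ¹)‖ ≥ σ‖Lx‖/‖L‖; consequently τ¹ is at least as large as any τ⁰ for which ‖e(t)‖ ≤ σ‖L x(t)‖/‖L‖ holds for all t ∈ [0, τ⁰] along x(t) = x + tLx. -/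
open Matrix

/-- Euclidean norm of a vector. -/
noncomputable def l2norm {m : ℕ} (v : Fin m → ℝ) : ℝ := Real.sqrt (v ⬝ᵥ v)

/-- Induced 2-norm of a matrix. -/
noncomputable def l2opNorm {m : ℕ} (M : Matrix (Fin m) (Fin m) ℝ) : ℝ :=
  sSup ((fun v => l2norm (M *ᵥ v)) '' {v : Fin m → ℝ | l2norm v ≤ 1})

noncomputable def toE {m : ℕ} (v : Fin m → ℝ) : EuclideanSpace ℝ (Fin m) := (WithLp.equiv 2 _).symm v

lemma dotPs_nonneg {m : ℕ} (v : Fin m → ℝ) : 0 ≤ v ⬝ᵥ v :=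
  Finset.sum_nonneg fun i _ => mul_self_nonneg _

lemma l2norm_eq_norm {m : ℕ} (v : Fin m → ℝ) : l2norm v = ‖toE v‖ := by
  rw [l2norm, toE, EuclideanSpace.norm_eq]
  congr 1
  refine Finset.sum_congr rfl fun i _ => ?_
  simp only [Real.norm_eq_abs, pow_two, abs_mul_abs_self]
  rfl

lemma sq_l2norm {m : ℕ} (v : Fin m → ℝ) : l2norm v ^ 2 = v ⬝ᵥ v :=
  Real.sq_sqrt (dotPs_nonneg v)

lemma l2norm_nonneg {m : ℕ} (v : Fin m → ℝ) : 0 ≤ l2norm v := Real.sqrt_nonneg _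

lemma l2norm_pos {m : ℕ} {v : Fin m → ℝ} (hv : v ≠ 0) : 0 < l2norm v := by
  rw [l2norm_eq_norm]
  rw [norm_pos_iff]
  exact fun hz => hv (by simpa [toE] using congrArg (WithLp.equiv 2 (Fin m → ℝ)) hz)

lemma l2norm_smul {m : ℕ} (s : ℝ) (v : Fin m → ℝ) : l2norm (s • v) = |s| * l2norm v := by
  rw [l2norm, l2norm, smul_dotProduct, dotProduct_smul, smul_eq_mul, smul_eq_mul, ← mul_assoc,
    ← pow_two, Real.sqrt_mul (sq_nonneg s), Real.sqrt_sq_eq_abs]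

lemma dot_cs {m : ℕ} (v w : Fin m → ℝ) : |v ⬝ᵥ w| ≤ l2norm v * l2norm w := by
  rw [l2norm_eq_norm, l2norm_eq_norm]
  have : v ⬝ᵥ w = (inner ℝ (toE v) (toE w) : ℝ) := by
    simp only [PiLp.inner_apply, RCLike.inner_apply, starRingEnd_apply, star_trivial, dotProduct]
    exact Finset.sum_congr rfl fun i _ => mul_comm _ _
  rw [this]
  exact abs_real_inner_le_norm _ _

noncomputable def Mop {m : ℕ} (M : Matrix (Fin m) (Fin m) ℝ) :
    EuclideanSpace ℝ (Fin m) →L[ℝ] EuclideanSpace ℝ (Fin m) :=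
  LinearMap.toContinuousLinearMap (Matrix.toEuclideanLin M)

lemma Mop_apply {m : ℕ} (M : Matrix (Fin m) (Fin m) ℝ) (v : Fin m → ℝ) :
    Mop M (toE v) = toE (M *ᵥ v) := by
  simp [Mop, toE, Matrix.toEuclideanLin_apply]

lemma l2opNorm_eq {m : ℕ} (M : Matrix (Fin m) (Fin m) ℝ) : l2opNorm M = ‖Mop M‖ := by
  rw [← ContinuousLinearMap.sSup_unitClosedBall_eq_norm (Mop M), l2opNorm]
  congr 1
  ext r
  constructor
  · rintro ⟨v, hv, rfl⟩
    refine ⟨toE v, ?_, ?_⟩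
    · rw [Metric.mem_closedBall, dist_zero_right, ← l2norm_eq_norm]; exact hv
    · show ‖Mop M (toE v)‖ = l2norm (M *ᵥ v)
      rw [Mop_apply, ← l2norm_eq_norm]
  · rintro ⟨u, hu, rfl⟩
    refine ⟨WithLp.equiv 2 _ u, ?_, ?_⟩
    · have : toE (WithLp.equiv 2 (Fin m → ℝ) u) = u := by simp [toE]
      rw [Set.mem_setOf_eq, l2norm_eq_norm, this]
      exact mem_closedBall_zero_iff.mp hu
    · have h2 : toE (WithLp.equiv 2 (Fin m → ℝ) u) = u := by simp [toE]
      show l2norm (M *ᵥ WithLp.equiv 2 (Fin m → ℝ) u) = ‖Mop M u‖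
      conv_rhs => rw [← h2, Mop_apply, ← l2norm_eq_norm]

lemma mulVec_le {m : ℕ} (M : Matrix (Fin m) (Fin m) ℝ) (v : Fin m → ℝ) :
    l2norm (M *ᵥ v) ≤ l2opNorm M * l2norm v := by
  rw [l2opNorm_eq, l2norm_eq_norm, l2norm_eq_norm, ← Mop_apply]
  exact (Mop M).le_opNorm _

lemma l2opNorm_pos {m : ℕ} {M : Matrix (Fin m) (Fin m) ℝ} {x : Fin m → ℝ} (h : M *ᵥ x ≠ 0) :
    0 < l2opNorm M := by
  by_contra hc
  push_neg at hc
  have hx : x ≠ 0 := by rintro rfl; simp at h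
  have := mulVec_le M x
  have h2 : l2norm (M *ᵥ x) ≤ 0 := le_trans this (mul_nonpos_of_nonpos_of_nonneg hc (l2norm_nonneg x))
  exact absurd (le_antisymm h2 (l2norm_nonneg _)) (ne_of_gt (l2norm_pos h))

set_option maxHeartbeats 1000000 in
/-- Comparison of self-triggered step sizes: with
`tau1 = σ (xᵀL²x)/(-xᵀL³x)` and `e(τ) = τ L x`, one has `‖e(tau1)‖ ≥ σ‖Lx‖/‖L‖`; hence `tau1`
is at least as large as any `tau0 ≥ 0` for which `‖e(t)‖ ≤ σ‖L x(t)‖/‖L‖` holds for all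
`t ∈ [0, tau0]` along `x(t) = x + t L x`. -/
theorem self_triggered_step_comparison
    {m : ℕ} [NeZero m]
    (L : Matrix (Fin m) (Fin m) ℝ)
    (hsymm : L.IsSymm)
    (hnsd : (-L).PosSemidef)
    (hsimple : Polynomial.rootMultiplicity (0 : ℝ) L.charpoly = 1)
    (σ : ℝ) (hσ : σ ∈ Set.Ioo (0:ℝ) 1)
    (x : Fin m → ℝ) (hLx : L *ᵥ x ≠ 0)
    (tau1 : ℝ)
    (htau1 : tau1 = σ * (x ⬝ᵥ ((L * L) *ᵥ x)) / (-(x ⬝ᵥ ((L * L * L) *ᵥ x)))) :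
    σ * l2norm (L *ᵥ x) / l2opNorm L ≤ l2norm (tau1 • (L *ᵥ x)) ∧
    ∀ tau0 : ℝ, 0 ≤ tau0 →
      (∀ s ∈ Set.Icc (0:ℝ) tau0,
        l2norm (s • (L *ᵥ x)) ≤ σ * l2norm (L *ᵥ (x + s • (L *ᵥ x))) / l2opNorm L) →
      tau0 ≤ tau1 := by
  obtain ⟨hσ0, hσ1⟩ := hσ
  set y := L *ᵥ x with hy
  set z := L *ᵥ y with hz
  set a := y ⬝ᵥ y with hadef
  set b := -(y ⬝ᵥ z) with hbdef
  set c := z ⬝ᵥ z with hcdef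
  set N := l2opNorm L with hN
  set ly := l2norm y with hly
  clear_value N ly
  have hlyeq : l2norm y = ly := hly.symm
  have hNeq : l2opNorm L = N := hN.symm
  -- symmetry swap
  have hswap : ∀ v w : Fin m → ℝ, v ⬝ᵥ (L *ᵥ w) = (L *ᵥ v) ⬝ᵥ w := by
    intro v w
    rw [Matrix.dotProduct_mulVec, ← Matrix.mulVec_transpose, hsymm.eq]
  have hlypos : 0 < ly := hlyeq ▸ l2norm_pos hLx
  have ha : 0 < a := by rw [hadef, ← sq_l2norm, hlyeq]; exact pow_pos hlypos 2
  have hbnn : 0 ≤ b := by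
    have := hnsd.dotProduct_mulVec_nonneg y
    simpa [Matrix.neg_mulVec, hbdef, hz] using this
  have hb : 0 < b := by
    rcases lt_or_eq_of_le hbnn with h | h
    · exact h
    have h0 : star y ⬝ᵥ ((-L) *ᵥ y) = 0 := by
      simp [Matrix.neg_mulVec]
      rw [show y ⬝ᵥ (L *ᵥ y) = -b by rw [hbdef]; ring]
      rw [← h]; ring
    have hzy : (-L) *ᵥ y = 0 := (hnsd.dotProduct_mulVec_zero_iff y).mp h0
    have hz0 : z = 0 := by
      have : -(L *ᵥ y) = 0 := by rwa [Matrix.neg_mulVec] at hzy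
      rw [hz]; exact neg_eq_zero.mp this
    have : a = 0 := by
      rw [hadef]
      calc y ⬝ᵥ y = y ⬝ᵥ (L *ᵥ x) := by rw [← hy]
        _ = (L *ᵥ y) ⬝ᵥ x := hswap y x
        _ = 0 := by rw [← hz, hz0, zero_dotProduct]
    linarith
  have hNpos : 0 < N := hNeq ▸ l2opNorm_pos hLx
  -- rewrite tau1
  have hL2 : x ⬝ᵥ ((L * L) *ᵥ x) = a := by
    rw [← Matrix.mulVec_mulVec, hswap, ← hy, hadef]
  have hL3 : x ⬝ᵥ ((L * L * L) *ᵥ x) = -b := by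
    rw [← Matrix.mulVec_mulVec, ← Matrix.mulVec_mulVec, hswap, ← hy]
    rw [hswap, ← hz, hbdef, neg_neg]
    exact dotProduct_comm z y
  have htau1' : tau1 = σ * a / b := by rw [htau1, hL2, hL3, neg_neg]
  have htau1b : tau1 * b = σ * a := by
    rw [htau1']; field_simp
  have htau1pos : 0 < tau1 := by
    rw [htau1']; positivity
  -- Cauchy-Schwarz facts
  have hlz : l2norm z ≤ N * ly := by
    rw [hz, ← hlyeq, ← hNeq]; exact mulVec_le L y
  have hlznn : 0 ≤ l2norm z := l2norm_nonneg z
  have hcs : b ≤ N * a := by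
    have h1 : |y ⬝ᵥ z| ≤ ly * l2norm z := hlyeq ▸ dot_cs y z
    have h2 : b ≤ |y ⬝ᵥ z| := by rw [hbdef]; exact neg_le_abs _
    have h3 : ly * l2norm z ≤ ly * (N * ly) :=
      mul_le_mul_of_nonneg_left hlz (le_of_lt hlypos)
    have h4 : ly * (N * ly) = N * a := by
      rw [hadef, ← sq_l2norm, hlyeq]; ring
    linarith
  have hc : c ≤ N ^ 2 * a := by
    have h1 : l2norm z ^ 2 ≤ (N * ly) ^ 2 := by
      apply pow_le_pow_left₀ hlznn hlz
    rw [sq_l2norm, ← hcdef] at h1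
    have : (N * ly) ^ 2 = N ^ 2 * a := by
      rw [hadef, ← sq_l2norm, hlyeq]; ring
    linarith
  have hb2 : b ^ 2 ≤ N ^ 2 * a ^ 2 := by
    have := mul_self_le_mul_self hbnn hcs
    nlinarith [this]
  constructor
  · -- part 1
    rw [l2norm_smul, abs_of_pos htau1pos, ← hly]
    rw [div_le_iff₀ hNpos]
    have k1 : tau1 * b ≤ tau1 * (N * a) := mul_le_mul_of_nonneg_left hcs htau1pos.le
    have k2 : σ * a ≤ tau1 * N * a := by linarith [htau1b, k1]
    have k3 : σ ≤ tau1 * N := le_of_mul_le_mul_right (by linarith [k2]) ha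
    have k4 : σ * ly ≤ tau1 * N * ly := mul_le_mul_of_nonneg_right k3 hlypos.le
    linarith [k4]
  · -- part 2
    intro tau0 ht0 hcond
    have hs := hcond tau0 ⟨ht0, le_refl tau0⟩
    rw [l2norm_smul, abs_of_nonneg ht0, ← hly] at hs
    have hLxs : L *ᵥ (x + tau0 • y) = y + tau0 • z := by
      rw [Matrix.mulVec_add, Matrix.mulVec_smul, ← hy, ← hz]
    rw [hLxs, le_div_iff₀ hNpos] at hs
    -- square it
    have hlhs : 0 ≤ tau0 * ly * N := by positivity
    have hsq : (tau0 * ly * N) ^ 2 ≤ (σ * l2norm (y + tau0 • z)) ^ 2 :=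
      pow_le_pow_left₀ hlhs hs 2
    have hw : l2norm (y + tau0 • z) ^ 2 = a - 2 * tau0 * b + tau0 ^ 2 * c := by
      rw [sq_l2norm]
      simp only [dotProduct_add, add_dotProduct, dotProduct_smul,
        smul_dotProduct, smul_eq_mul]
      rw [dotProduct_comm z y]
      rw [hadef, hbdef, hcdef]; ring
    have hq : tau0 ^ 2 * a * N ^ 2 ≤ σ ^ 2 * (a - 2 * tau0 * b + tau0 ^ 2 * c) := by
      have : (σ * l2norm (y + tau0 • z)) ^ 2 = σ ^ 2 * (l2norm (y + tau0 • z)) ^ 2 := by ring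
      rw [this, hw] at hsq
      have h2 : (tau0 * ly * N) ^ 2 = tau0 ^ 2 * a * N ^ 2 := by
        rw [hadef, ← sq_l2norm, hlyeq]; ring
      linarith
    by_contra hcontra
    push_neg at hcontra
    -- derive contradiction
    have e1 : tau0 ^ 2 * a * N ^ 2 * (1 - σ ^ 2) + 2 * σ ^ 2 * tau0 * b ≤ σ ^ 2 * a := by
      have hprod : 0 ≤ σ ^ 2 * tau0 ^ 2 * (N ^ 2 * a - c) :=
        mul_nonneg (mul_nonneg (sq_nonneg σ) (sq_nonneg tau0)) (sub_nonneg.mpr hc)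
      nlinarith [hq, hprod]
    have e2 : σ * a < tau0 * b := by
      calc σ * a = tau1 * b := htau1b.symm
        _ < tau0 * b := by exact mul_lt_mul_of_pos_right hcontra hb
    have e3 : σ ^ 2 * a ^ 2 < tau0 ^ 2 * b ^ 2 := by
      have h := mul_self_lt_mul_self (le_of_lt (mul_pos hσ0 ha)) e2
      nlinarith [h]
    have e5 : σ ^ 2 * a < tau0 ^ 2 * N ^ 2 * a := by
      have h1 : tau0 ^ 2 * b ^ 2 ≤ tau0 ^ 2 * (N ^ 2 * a ^ 2) :=
        mul_le_mul_of_nonneg_left hb2 (sq_nonneg tau0)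
      have h2 : σ ^ 2 * a ^ 2 < tau0 ^ 2 * N ^ 2 * a ^ 2 := by linarith [e3, h1]
      have h3 : (σ ^ 2 * a) * a < (tau0 ^ 2 * N ^ 2 * a) * a := by nlinarith [h2]
      exact lt_of_mul_lt_mul_right h3 ha.le
    have pos1 : (0:ℝ) < 1 - σ ^ 2 := by
      have := pow_lt_one₀ hσ0.le hσ1 (two_ne_zero)
      linarith
    have A1 : σ ^ 2 * a * (1 - σ ^ 2) < tau0 ^ 2 * a * N ^ 2 * (1 - σ ^ 2) := by
      have h := mul_lt_mul_of_pos_right e5 pos1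
      nlinarith [h]
    have B1 : 2 * σ ^ 2 * (σ * a) < 2 * σ ^ 2 * (tau0 * b) := by
      apply mul_lt_mul_of_pos_left e2; positivity
    have key : σ ^ 2 * a * (1 - σ ^ 2) + 2 * σ ^ 2 * (σ * a) < σ ^ 2 * a := by
      linarith [A1, B1, e1]
    have h2σ : (0:ℝ) < 2 - σ := by linarith
    have pos2 : 0 < σ ^ 3 * a * (2 - σ) :=
      mul_pos (mul_pos (pow_pos hσ0 3) ha) h2σ
    linarith only [key, pos2]
end
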